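/- arXiv:1606.02341 — 6 statements merged into one kernel-verified Lean document; each statement's English description precedes it below -/
import Mathlib

section
/- Let K be a number field. There exists a constant κ > 0, depending only on K, such that every principal fractional ideal 𝔞 of K has a generator α satisfying |α|_v ≤ κ·(N𝔞)^{1/d} for every archimedean place v of K, where d = [K:ℚ] and N𝔞 is the absolute norm of 𝔞. -/
open NumberField
open scoped nonZeroDivisors

open NumberField.InfinitePlace NumberField.Units NumberField.Units.dirichletUnitTheorem Module Submodule

/-- **A "reduced" generator of a principal fractional ideal.**
Let `K` be a number field of degree `d` over `ℚ`. There is a constant `κ > 0`, depending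
only on `K`, such that every nonzero principal fractional ideal `I` of `K` has a generator
`α` with `|α|_v ≤ κ · (NI)^(1/d)` for every archimedean place `v` of `K`. -/
theorem reduced_generator_of_principal_fractional_ideal
    (K : Type*) [Field K] [NumberField K] :
    ∃ κ : ℝ, 0 < κ ∧
      ∀ I : FractionalIdeal (𝓞 K)⁰ K, I ≠ 0 →
        (I : Submodule (𝓞 K) K).IsPrincipal →
          ∃ α : K, FractionalIdeal.spanSingleton (𝓞 K)⁰ α = I ∧
            ∀ v : InfinitePlace K,
              v α ≤ κ * (FractionalIdeal.absNorm I : ℝ) ^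
                ((1 : ℝ) / (Module.finrank ℚ K : ℝ)) := by
  classical
  have hd0 : (0 : ℝ) < (Module.finrank ℚ K : ℝ) := by
    exact_mod_cast Module.finrank_pos
  set b := (basisUnitLattice K).ofZLatticeBasis ℝ (unitLattice K) with hb
  obtain ⟨C, hC⟩ := (ZSpan.fundamentalDomain_isBounded b).exists_norm_le
  set C' : ℝ := max C 0 with hC'
  have hC'0 : 0 ≤ C' := le_max_right _ _
  set r : ℕ := Fintype.card (InfinitePlace K) with hr
  have hr1 : (1 : ℝ) ≤ r := by
    exact_mod_cast Fintype.card_pos (α := InfinitePlace K)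
  refine ⟨Real.exp (r * C'), Real.exp_pos _, fun I hI0 hIp => ?_⟩
  obtain ⟨β, hβ⟩ := (FractionalIdeal.isPrincipal_iff I).mp hIp
  have hβ0 : β ≠ 0 := by
    rintro rfl; exact hI0 (by simpa using hβ)
  have hNI : (FractionalIdeal.absNorm I : ℝ) = |(Algebra.norm ℚ β : ℝ)| := by
    rw [hβ, FractionalIdeal.absNorm_span_singleton]; push_cast; ring
  have hNβ : (Algebra.norm ℚ β) ≠ 0 := (Algebra.norm_ne_zero_iff).mpr hβ0
  set N : ℝ := (FractionalIdeal.absNorm I : ℝ) with hN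
  have hN0 : 0 < N := by
    rw [hNI]
    exact abs_pos.mpr (by exact_mod_cast hNβ)
  set t : ℝ := Real.log N / (Module.finrank ℚ K : ℝ) with ht
  set x : {w : InfinitePlace K // w ≠ w₀} → ℝ :=
    fun w => (mult w.1 : ℝ) * (Real.log (w.1 β) - t) with hx
  -- find a unit whose log-embedding is the lattice part of `x`
  have hfloor : (ZSpan.floor b x : ({w : InfinitePlace K // w ≠ w₀} → ℝ)) ∈ unitLattice K := by
    rw [← Basis.ofZLatticeBasis_span ℝ (unitLattice K) (b := basisUnitLattice K)]
    exact SetLike.coe_mem _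
  obtain ⟨u', -, hu⟩ := hfloor
  set u : (𝓞 K)ˣ := Additive.toMul u' with hu'
  have hu2 : logEmbedding K (Additive.ofMul u) = (ZSpan.floor b x : _) := hu
  have hfract : ∀ w, x w - logEmbedding K (Additive.ofMul u) w = ZSpan.fract b x w := by
    intro w
    rw [hu2, ZSpan.fract_apply]
    rfl
  have hbound : ∀ w, |x w - logEmbedding K (Additive.ofMul u) w| ≤ C' := by
    intro w
    rw [hfract w]
    refine le_trans ?_ (le_max_left C 0)
    exact le_trans (norm_le_pi_norm (ZSpan.fract b x) w)
      (hC _ (ZSpan.fract_mem_fundamentalDomain b x))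
  -- the new generator
  set α : K := u⁻¹ • β with hα
  have hmul : (u : K) * α = β := by
    rw [hα, Units.smul_def, Algebra.smul_def, ← mul_assoc, ← map_mul, Units.mul_inv, map_one,
      one_mul]
  have hα0 : α ≠ 0 := by
    intro h; apply hβ0; rw [← hmul, h, mul_zero]
  have hinj := FaithfulSMul.algebraMap_injective (𝓞 K) K
  have hwu0 : ∀ w : InfinitePlace K, w (u : K) ≠ 0 :=
    fun w => ne_of_gt (pos_iff.mpr (fun h => u.ne_zero (hinj (by rw [map_zero]; exact h))))
  have hlog : ∀ w : InfinitePlace K,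
      Real.log (w α) = Real.log (w β) - Real.log (w (u : K)) := by
    intro w
    rw [← hmul, map_mul, Real.log_mul (hwu0 w) (ne_of_gt (pos_iff.mpr hα0))]
    ring
  -- components for w ≠ w₀ are bounded
  have hA : ∀ w : {w : InfinitePlace K // w ≠ w₀},
      (mult w.1 : ℝ) * (Real.log (w.1 α) - t) ≤ C' := by
    intro w
    have := hbound w
    rw [logEmbedding_component, hx] at this
    calc (mult w.1 : ℝ) * (Real.log (w.1 α) - t)
        = (mult w.1 : ℝ) * (Real.log (w.1 β) - t) - (mult w.1 : ℝ) * Real.log (w.1 (u : K)) := by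
          rw [hlog w.1]; ring
      _ ≤ C' := le_trans (le_abs_self _) this
  -- the sum over all places is zero
  have hNα : |(Algebra.norm ℚ α : ℝ)| = N := by
    have h1 : (Algebra.norm ℚ β) = (Algebra.norm ℚ (u : K)) * (Algebra.norm ℚ α) := by
      rw [← map_mul, hmul]
    have h2 : |(Algebra.norm ℚ (u : K))| = 1 := _root_.NumberField.Units.norm K u
    have h3 : |Algebra.norm ℚ α| = |Algebra.norm ℚ β| := by
      rw [h1, abs_mul, h2, one_mul]
    rw [hNI, ← Rat.cast_abs, h3, Rat.cast_abs]
  have hsum : ∑ w : InfinitePlace K, (mult w : ℝ) * (Real.log (w α) - t) = 0 := by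
    have hprod : ∑ w : InfinitePlace K, (mult w : ℝ) * Real.log (w α) = Real.log N := by
      rw [← hNα, ← Rat.cast_abs, ← prod_eq_abs_norm α, Real.log_prod]
      · exact Finset.sum_congr rfl fun w _ => by rw [Real.log_pow]
      · exact fun w _ => pow_ne_zero _ (ne_of_gt (pos_iff.mpr hα0))
    have hmultsum : ∑ w : InfinitePlace K, (mult w : ℝ) = (Module.finrank ℚ K : ℝ) := by
      exact_mod_cast sum_mult_eq (K := K)
    simp_rw [mul_sub]
    rw [Finset.sum_sub_distrib, hprod, ← Finset.sum_mul, hmultsum, ht]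
    field_simp
    simp
  -- hence the w₀ component is bounded as well
  have hA0 : (mult (w₀ : InfinitePlace K) : ℝ) * (Real.log (w₀ α) - t) ≤ (r - 1) * C' := by
    have hsplit : ∑ w : InfinitePlace K, (mult w : ℝ) * (Real.log (w α) - t) =
        (mult (w₀ : InfinitePlace K) : ℝ) * (Real.log (w₀ α) - t) +
          ∑ w : {w : InfinitePlace K // w ≠ w₀}, (mult w.1 : ℝ) * (Real.log (w.1 α) - t) := by
      rw [Fintype.sum_eq_add_sum_compl (w₀ : InfinitePlace K)]
      congr 1
      exact (Finset.sum_subtype _ (fun w => by simp) _)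
    have h1 : (mult (w₀ : InfinitePlace K) : ℝ) * (Real.log (w₀ α) - t) =
        - ∑ w : {w : InfinitePlace K // w ≠ w₀}, (mult w.1 : ℝ) * (Real.log (w.1 α) - t) := by
      rw [eq_neg_iff_add_eq_zero, ← hsplit, hsum]
    rw [h1]
    calc - ∑ w : {w : InfinitePlace K // w ≠ w₀}, (mult w.1 : ℝ) * (Real.log (w.1 α) - t)
        ≤ |∑ w : {w : InfinitePlace K // w ≠ w₀}, (mult w.1 : ℝ) * (Real.log (w.1 α) - t)| :=
          neg_le_abs _
      _ ≤ ∑ w : {w : InfinitePlace K // w ≠ w₀},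
            |(mult w.1 : ℝ) * (Real.log (w.1 α) - t)| := Finset.abs_sum_le_sum_abs _ _
      _ ≤ ∑ _w : {w : InfinitePlace K // w ≠ w₀}, C' := by
          refine Finset.sum_le_sum fun w _ => ?_
          have h2 := hbound w
          rw [logEmbedding_component, hx] at h2
          have : (mult w.1 : ℝ) * (Real.log (w.1 α) - t) =
              (mult w.1 : ℝ) * (Real.log (w.1 β) - t) -
                (mult w.1 : ℝ) * Real.log (w.1 (u : K)) := by rw [hlog w.1]; ring
          rw [this]
          exact h2
      _ = (Fintype.card {w : InfinitePlace K // w ≠ w₀} : ℝ) * C' := by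
          rw [Finset.sum_const, nsmul_eq_mul, Finset.card_univ]
      _ ≤ (r - 1) * C' := by
          refine mul_le_mul_of_nonneg_right ?_ hC'0
          have hcard : Fintype.card {w : InfinitePlace K // w ≠ w₀} = r - 1 := by
            rw [hr]
            simp [Fintype.card_subtype_compl, Fintype.card_ofSubsingleton]
          have h1le : 1 ≤ r := by exact_mod_cast hr1
          rw [hcard]
          push_cast [Nat.cast_sub h1le]
          simp
  -- uniform bound on the logs
  have key : ∀ w : InfinitePlace K, ∀ B : ℝ, 0 ≤ B →
      (mult w : ℝ) * (Real.log (w α) - t) ≤ B → Real.log (w α) - t ≤ B := by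
    intro w B hB hwB
    have hm1 : (1 : ℝ) ≤ (mult w : ℝ) := one_le_mult
    rcases le_or_gt (Real.log (w α) - t) 0 with h | h
    · linarith
    · have h4 := mul_le_mul_of_nonneg_right hm1 h.le
      rw [one_mul] at h4
      linarith
  have hloga : ∀ w : InfinitePlace K, Real.log (w α) ≤ t + r * C' := by
    intro w
    have hrC : ((r : ℝ) - 1) * C' ≤ (r : ℝ) * C' :=
      mul_le_mul_of_nonneg_right (by linarith) hC'0
    have hCrC : C' ≤ (r : ℝ) * C' := by
      have := mul_le_mul_of_nonneg_right hr1 hC'0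
      rwa [one_mul] at this
    have hrC0 : (0 : ℝ) ≤ ((r : ℝ) - 1) * C' := mul_nonneg (by linarith) hC'0
    by_cases hw : w = w₀
    · rw [hw]
      have h5 := key w₀ (((r : ℝ) - 1) * C') hrC0 hA0
      linarith
    · have h5 := key w C' hC'0 (hA ⟨w, hw⟩)
      linarith
  -- conclude
  refine ⟨α, ?_, fun v => ?_⟩
  · rw [hβ]
    refine (FractionalIdeal.spanSingleton_eq_spanSingleton (R := 𝓞 K)).mpr ⟨u, ?_⟩
    rw [hα, smul_inv_smul]
  · have hvα : 0 < v α := pos_iff.mpr hα0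
    have h1 : v α ≤ Real.exp (t + r * C') := by
      rw [← Real.exp_log hvα]
      exact Real.exp_le_exp.mpr (hloga v)
    have h2 : Real.exp (t + r * C') =
        Real.exp (r * C') * N ^ ((1 : ℝ) / (Module.finrank ℚ K : ℝ)) := by
      rw [Real.exp_add, Real.rpow_def_of_pos hN0, ht]
      ring_nf
    calc v α ≤ Real.exp (t + r * C') := h1
      _ = _ := h2
end

section
/- Let K be a number field of degree d. There exists a constant κ > 0, depending only on K, such that for every nonzero prime ideal 𝔭 of 𝒪_K there exists π ∈ 𝒪_K with v_𝔭(π) = 1 and max over archimedean places v of |π|_v ≤ κ·(N𝔭)^{1/d}. -/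
open NumberField

open NumberField NumberField.InfinitePlace NumberField.mixedEmbedding MeasureTheory
open scoped NNReal ENNReal nonZeroDivisors

/-- Minkowski step: an element of `p` with all archimedean values `< τ * N(p)^(1/d)`. -/
lemma mink_step (K : Type*) [Field K] [NumberField K] (τ : ℝ≥0)
    (hτ : minkowskiBound K 1 < (τ : ℝ≥0∞)) (hτ1 : 1 ≤ τ)
    (p : Ideal (𝓞 K)) (hp0 : p ≠ ⊥) :
    ∃ π : 𝓞 K, π ∈ p ∧ π ≠ 0 ∧ ∀ w : InfinitePlace K,
      w (algebraMap (𝓞 K) K π) <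
        ((τ * (Ideal.absNorm p : ℝ≥0) ^ ((1:ℝ)/(Module.finrank ℚ K : ℝ)) : ℝ≥0) : ℝ) := by
  classical
  set d := Module.finrank ℚ K with hd_def
  have hd : 0 < d := Module.finrank_pos
  set N := Ideal.absNorm p with hN_def
  have hN0 : N ≠ 0 := by rwa [Ne, Ideal.absNorm_eq_zero_iff]
  set c : ℝ≥0 := τ * (N : ℝ≥0) ^ ((1:ℝ)/(d : ℝ)) with hc_def
  have hI0 : (↑p : FractionalIdeal (𝓞 K)⁰ K) ≠ 0 := by
    rwa [Ne, FractionalIdeal.coeIdeal_eq_zero]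
  set I : (FractionalIdeal (𝓞 K)⁰ K)ˣ := Units.mk0 _ hI0 with hI_def
  have hcd : c ^ d = τ ^ d * (N : ℝ≥0) := by
    rw [hc_def, mul_pow]
    congr 1
    rw [← NNReal.rpow_natCast ((N : ℝ≥0) ^ ((1:ℝ)/(d : ℝ))) d, ← NNReal.rpow_mul,
      one_div, inv_mul_cancel₀ (by exact_mod_cast hd.ne'), NNReal.rpow_one]
  have hmb : minkowskiBound K I = (N : ℝ≥0∞) * minkowskiBound K 1 := by
    rw [minkowskiBound, minkowskiBound, volume_fundamentalDomain_fractionalIdealLatticeBasis,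
      volume_fundamentalDomain_fractionalIdealLatticeBasis]
    have h1 : ((1 : (FractionalIdeal (𝓞 K)⁰ K)ˣ) : FractionalIdeal (𝓞 K)⁰ K) = 1 := rfl
    rw [hI_def, Units.val_mk0, FractionalIdeal.coeIdeal_absNorm, h1,
      FractionalIdeal.absNorm_one]
    simp only [Rat.cast_natCast, Rat.cast_one, ENNReal.ofReal_one, ENNReal.ofReal_natCast,
      one_mul]
    ring
  have hvol : minkowskiBound K I < volume (convexBodyLT K (fun _ => c)) := by
    rw [convexBodyLT_volume, hmb]
    have hprod : (∏ w : InfinitePlace K, c ^ (mult w)) = c ^ d := by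
      rw [Finset.prod_pow_eq_pow_sum, sum_mult_eq]
    rw [hprod, hcd]
    have h2 : minkowskiBound K 1 < (convexBodyLTFactor K : ℝ≥0∞) * ((τ ^ d : ℝ≥0) : ℝ≥0∞) := by
      refine hτ.trans_le ?_
      calc (τ : ℝ≥0∞) ≤ ((τ ^ d : ℝ≥0) : ℝ≥0∞) := by
            rw [ENNReal.coe_le_coe]
            exact le_self_pow₀ hτ1 hd.ne'
        _ ≤ (convexBodyLTFactor K : ℝ≥0∞) * ((τ ^ d : ℝ≥0) : ℝ≥0∞) := by
            refine le_mul_of_one_le_left (zero_le) ?_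
            exact_mod_cast one_le_convexBodyLTFactor K
    calc (N : ℝ≥0∞) * minkowskiBound K 1
        < (N : ℝ≥0∞) * ((convexBodyLTFactor K : ℝ≥0∞) * ((τ ^ d : ℝ≥0) : ℝ≥0∞)) := by
          refine ENNReal.mul_lt_mul_right ?_ ?_ h2
          · exact_mod_cast hN0
          · exact ENNReal.natCast_ne_top N
      _ = (convexBodyLTFactor K : ℝ≥0∞) * ((τ ^ d * (N : ℝ≥0) : ℝ≥0) : ℝ≥0∞) := by
          push_cast
          ring
  obtain ⟨a, ha_mem, ha_nz, ha_bd⟩ := exists_ne_zero_mem_ideal_lt K I hvol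
  rw [hI_def, Units.val_mk0, FractionalIdeal.mem_coeIdeal] at ha_mem
  obtain ⟨π, hπp, rfl⟩ := ha_mem
  refine ⟨π, hπp, ?_, fun w => ha_bd w⟩
  intro h
  exact ha_nz (by rw [h, map_zero])

/-- **A "reduced" primitive element for a prime ideal.**
Let `K` be a number field of degree `d`. There is a constant `κ > 0`, depending only on `K`,
such that for every nonzero prime ideal `𝔭` of `𝒪_K` there is `π ∈ 𝒪_K` with `v_𝔭(π) = 1`
(i.e. `π ∈ 𝔭` but `π ∉ 𝔭²`) and `|π|_v ≤ κ · (N𝔭)^(1/d)` for every archimedean place `v`. -/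
theorem reduced_primitive_element_of_prime
    (K : Type*) [Field K] [NumberField K] :
    ∃ κ : ℝ, 0 < κ ∧
      ∀ p : Ideal (𝓞 K), p.IsPrime → p ≠ ⊥ →
        ∃ π : 𝓞 K, π ∈ p ∧ π ∉ p ^ 2 ∧
          ∀ v : InfinitePlace K,
            v (algebraMap (𝓞 K) K π) ≤
              κ * (Ideal.absNorm p : ℝ) ^ ((1 : ℝ) / (Module.finrank ℚ K : ℝ)) := by
  classical
  set d := Module.finrank ℚ K with hd_def
  have hd : 0 < d := Module.finrank_pos
  obtain ⟨n, hn⟩ := ENNReal.exists_nat_gt (minkowskiBound_lt_top K 1).ne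
  set τ : ℝ≥0 := (n : ℝ≥0) + 1 with hτ_def
  have hτ : minkowskiBound K 1 < (τ : ℝ≥0∞) := by
    refine hn.trans_le ?_
    rw [hτ_def]
    push_cast
    exact le_add_of_nonneg_right zero_le_one
  have hτ1 : 1 ≤ τ := le_add_of_nonneg_left (zero_le)
  set C : ℕ := (n + 1) ^ d with hC_def
  have hfin := Ideal.finite_setOf_absNorm_le (S := 𝓞 K) C
  set g : Ideal (𝓞 K) → 𝓞 K := fun q =>
    if h : ∃ x : 𝓞 K, x ∈ q ∧ x ∉ q ^ 2 then h.choose else 0 with hg_def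
  set B : Ideal (𝓞 K) → ℝ := fun q =>
    Finset.univ.sup' Finset.univ_nonempty
      (fun w : InfinitePlace K => w (algebraMap (𝓞 K) K (g q))) with hB_def
  set κ : ℝ := (n + 1 : ℝ) + ∑ q ∈ hfin.toFinset, max (B q) 0 with hκ_def
  have hsum_nonneg : 0 ≤ ∑ q ∈ hfin.toFinset, max (B q) 0 :=
    Finset.sum_nonneg fun q _ => le_max_right _ _
  have hκτ : (n + 1 : ℝ) ≤ κ := le_add_of_nonneg_right hsum_nonneg
  have hκ0 : 0 < κ := lt_of_lt_of_le (by positivity) hκτ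
  refine ⟨κ, hκ0, fun p hp hp0 => ?_⟩
  set N := Ideal.absNorm p with hN_def
  have hN0 : N ≠ 0 := by rwa [Ne, Ideal.absNorm_eq_zero_iff]
  have hN1 : (1 : ℝ) ≤ (N : ℝ) := by exact_mod_cast Nat.one_le_iff_ne_zero.mpr hN0
  have hrp1 : (1 : ℝ) ≤ (N : ℝ) ^ ((1 : ℝ) / (d : ℝ)) := by
    calc (1 : ℝ) = 1 ^ ((1 : ℝ) / (d : ℝ)) := (Real.one_rpow _).symm
      _ ≤ (N : ℝ) ^ ((1 : ℝ) / (d : ℝ)) :=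
        Real.rpow_le_rpow zero_le_one hN1 (by positivity)
  have hrp0 : (0 : ℝ) ≤ (N : ℝ) ^ ((1 : ℝ) / (d : ℝ)) := le_trans zero_le_one hrp1
  have hex : ∃ x : 𝓞 K, x ∈ p ∧ x ∉ p ^ 2 := by
    have hlt : p ^ 2 < p ^ 1 := Ideal.pow_succ_lt_pow hp0 1
    rw [pow_one] at hlt
    obtain ⟨x, hx1, hx2⟩ := SetLike.exists_of_lt hlt
    exact ⟨x, hx1, hx2⟩
  by_cases hsmall : N ≤ C
  · refine ⟨g p, ?_, ?_, ?_⟩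
    · have : g p = hex.choose := by rw [hg_def]; exact dif_pos hex
      rw [this]; exact hex.choose_spec.1
    · have : g p = hex.choose := by rw [hg_def]; exact dif_pos hex
      rw [this]; exact hex.choose_spec.2
    · intro w
      have h1 : w (algebraMap (𝓞 K) K (g p)) ≤ B p :=
        Finset.le_sup' (fun w : InfinitePlace K => w (algebraMap (𝓞 K) K (g p)))
          (Finset.mem_univ w)
      have h2 : B p ≤ ∑ q ∈ hfin.toFinset, max (B q) 0 :=
        le_trans (le_max_left _ _)
          (Finset.single_le_sum (fun q _ => le_max_right (B q) 0)
            (hfin.mem_toFinset.mpr hsmall))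
      have h3 : w (algebraMap (𝓞 K) K (g p)) ≤ κ :=
        le_trans h1 (le_trans h2 (by rw [hκ_def]; nlinarith))
      calc w (algebraMap (𝓞 K) K (g p)) ≤ κ := h3
        _ ≤ κ * (N : ℝ) ^ ((1 : ℝ) / (d : ℝ)) :=
          le_mul_of_one_le_right hκ0.le hrp1
  · push_neg at hsmall
    obtain ⟨π, hπp, hπ0, hbd⟩ := mink_step K τ hτ hτ1 p hp0
    have hπK0 : algebraMap (𝓞 K) K π ≠ 0 := by
      simpa using (RingOfIntegers.coe_ne_zero_iff).mpr hπ0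
    have hbd' : ∀ w : InfinitePlace K,
        w (algebraMap (𝓞 K) K π) < (n + 1 : ℝ) * (N : ℝ) ^ ((1 : ℝ) / (d : ℝ)) := by
      intro w
      have := hbd w
      rwa [NNReal.coe_mul, NNReal.coe_rpow, hτ_def] at this
      -- coercions
    refine ⟨π, hπp, ?_, fun w => le_trans (hbd' w).le ?_⟩
    · intro hπ2
      have h1 : N ^ 2 ∣ Ideal.absNorm (Ideal.span {π}) := by
        have := Ideal.absNorm_dvd_absNorm_of_le
          ((Ideal.span_singleton_le_iff_mem _).mpr hπ2)
        rwa [map_pow] at this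
      have h2 : Ideal.absNorm (Ideal.span {π}) ≠ 0 := by
        rw [Ne, Ideal.absNorm_eq_zero_iff, Ideal.span_singleton_eq_bot]
        exact hπ0
      have h3 : ((N : ℝ)) ^ 2 ≤ (Ideal.absNorm (Ideal.span {π}) : ℝ) := by
        exact_mod_cast Nat.le_of_dvd (Nat.pos_of_ne_zero h2) h1
      have h4 : (Ideal.absNorm (Ideal.span {π}) : ℝ) =
          ((|Algebra.norm ℚ (algebraMap (𝓞 K) K π)| : ℚ) : ℝ) := by
        rw [Ideal.absNorm_span_singleton, Nat.cast_natAbs]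
        exact_mod_cast congrArg abs (Algebra.coe_norm_int π)
      have h5 : (Ideal.absNorm (Ideal.span {π}) : ℝ) <
          ((n + 1 : ℝ)) ^ d * (N : ℝ) := by
        rw [h4, ← InfinitePlace.prod_eq_abs_norm]
        have hRHS : ∏ w : InfinitePlace K,
            ((n + 1 : ℝ) * (N : ℝ) ^ ((1 : ℝ) / (d : ℝ))) ^ mult w =
            ((n + 1 : ℝ)) ^ d * (N : ℝ) := by
          rw [Finset.prod_pow_eq_pow_sum, sum_mult_eq, ← hd_def, mul_pow]
          congr 1
          rw [← Real.rpow_natCast ((N : ℝ) ^ ((1 : ℝ) / (d : ℝ))) d,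
            ← Real.rpow_mul (Nat.cast_nonneg N), one_div,
            inv_mul_cancel₀ (by exact_mod_cast hd.ne'), Real.rpow_one]
        rw [← hRHS]
        refine Finset.prod_lt_prod_of_nonempty ?_ ?_ Finset.univ_nonempty
        · intro w _
          exact pow_pos ((InfinitePlace.pos_iff.mpr hπK0)) _
        · intro w _
          exact pow_lt_pow_left₀ (hbd' w) (apply_nonneg w _)
            (InfinitePlace.mult_pos.ne' )
      have hlt : (N : ℝ) < ((n + 1 : ℝ)) ^ d := by
        have hNpos : (0 : ℝ) < N := lt_of_lt_of_le zero_lt_one hN1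
        nlinarith [lt_of_le_of_lt h3 h5]
      have hge : ((n + 1 : ℝ)) ^ d ≤ (N : ℝ) := by
        have : (C : ℝ) < (N : ℝ) := by exact_mod_cast hsmall
        rw [hC_def] at this
        push_cast at this
        linarith
      linarith
    · exact mul_le_mul_of_nonneg_right hκτ hrp0
end

section
/- (Strassmann's theorem) Let K be a field complete with respect to a nontrivial non-archimedean absolute value |·|, and let f(T) = Σ_{k≥0} a_k T^k be a power series with coefficients in K such that |a_k| → 0 as k → ∞ and not all a_k are zero. Let A = max_k |a_k| and let N = max{k : |a_k| = A}. Then f has at most N zeros α ∈ K with |α| ≤ 1. -/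
open Filter

section StrassmannAux

variable {K : Type*} [NontriviallyNormedField K] [IsUltrametricDist K] [CompleteSpace K]

set_option maxHeartbeats 1000000
set_option linter.unusedSectionVars false

private lemma strass_summable {ι : Type*} {c : ι → K}
    (h : Tendsto (fun i => ‖c i‖) cofinite (nhds 0)) : Summable c :=
  NonarchimedeanAddGroup.summable_of_tendsto_cofinite_zero
    (tendsto_zero_iff_norm_tendsto_zero.mpr h)

private lemma strass_summable_nat {c : ℕ → K}
    (h : Tendsto (fun i => ‖c i‖) atTop (nhds 0)) : Summable c := by
  apply strass_summable
  rwa [Nat.cofinite_eq_atTop]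

/-- Strict bound on the norm of a tsum when all terms are strictly below `A`. -/
private lemma strass_tsum_lt {c : ℕ → K} (h0 : Tendsto (fun i => ‖c i‖) atTop (nhds 0))
    {A : ℝ} (hA : 0 < A) (hc : ∀ i, ‖c i‖ < A) : ‖∑' i, c i‖ < A := by
  obtain ⟨n₀, hn₀⟩ := (Metric.tendsto_atTop.mp h0) (A / 2) (by linarith)
  have hne : (Finset.range (n₀ + 1)).Nonempty := ⟨0, by simp⟩
  set C : ℝ := max (A / 2) ((Finset.range (n₀ + 1)).sup' hne fun i => ‖c i‖) with hC
  have hCA : C < A := by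
    rw [hC, max_lt_iff]
    refine ⟨by linarith, ?_⟩
    rw [Finset.sup'_lt_iff]
    exact fun i _ => hc i
  have hCnonneg : 0 ≤ C := le_trans (by linarith) (le_max_left _ _)
  have hterm : ∀ i, ‖c i‖ ≤ C := by
    intro i
    rcases le_or_gt i n₀ with hi | hi
    · exact le_trans (Finset.le_sup' (fun i => ‖c i‖) (by simp [Nat.lt_succ_iff, hi]))
        (le_max_right _ _)
    · have := hn₀ i hi.le
      rw [Real.dist_eq, sub_zero, abs_of_nonneg (norm_nonneg _)] at this
      exact le_trans this.le (le_max_left _ _)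
  exact lt_of_le_of_lt (IsUltrametricDist.norm_tsum_le_of_forall_le_of_nonneg hCnonneg hterm) hCA

/-- The key factorization identity: for `‖α‖ ≤ 1`, `‖β‖ ≤ 1`,
`f(β) - f(α) = g(β) * (β - α)` where `g` has coefficients `b j = ∑' i, a (j+1+i) * α ^ i`. -/
private lemma strass_factor {a : ℕ → K} (ha : Tendsto (fun k => ‖a k‖) atTop (nhds 0))
    {α β : K} (hα : ‖α‖ ≤ 1) (hβ : ‖β‖ ≤ 1) :
    (∑' k, a k * β ^ k) - (∑' k, a k * α ^ k)
      = (∑' j, (∑' i, a (j + 1 + i) * α ^ i) * β ^ j) * (β - α) := by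
  have hpow : ∀ (γ : K), ‖γ‖ ≤ 1 → ∀ m : ℕ, ‖γ ^ m‖ ≤ 1 := by
    intro γ hγ m
    rw [norm_pow]
    exact pow_le_one₀ (norm_nonneg _) hγ
  have hsummable : ∀ (γ : K), ‖γ‖ ≤ 1 → Summable (fun k => a k * γ ^ k) := by
    intro γ hγ
    apply strass_summable_nat
    apply squeeze_zero (fun k => norm_nonneg _) (fun k => ?_) ha
    rw [norm_mul]
    exact mul_le_of_le_one_right (norm_nonneg _) (hpow γ hγ k)
  set d : ℕ × ℕ → K := fun p => if p.2 < p.1 then a p.1 * β ^ p.2 * α ^ (p.1 - 1 - p.2) else 0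
    with hd
  have hd_le : ∀ p, ‖d p‖ ≤ ‖a p.1‖ := by
    intro p
    rw [hd]
    dsimp only
    split_ifs with hp
    · rw [norm_mul, norm_mul]
      calc ‖a p.1‖ * ‖β ^ p.2‖ * ‖α ^ (p.1 - 1 - p.2)‖
          ≤ ‖a p.1‖ * 1 * 1 := by
            gcongr
            · exact hpow β hβ _
            · exact hpow α hα _
        _ = ‖a p.1‖ := by ring
    · simp
  have hd_sum : Summable d := by
    apply strass_summable
    rw [Metric.tendsto_nhds]
    intro ε hε
    rw [Filter.eventually_cofinite]
    have hafin : {k | ε ≤ ‖a k‖}.Finite := by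
      have := (Metric.tendsto_nhds.mp ha) ε hε
      rw [← Nat.cofinite_eq_atTop, Filter.eventually_cofinite] at this
      apply this.subset
      intro k hk
      simp only [Real.dist_eq, sub_zero, abs_of_nonneg (norm_nonneg _), Set.mem_setOf_eq, not_lt]
      exact hk
    apply (hafin.biUnion (fun k _ => (Set.finite_singleton k).prod (Set.finite_Iio k))).subset
    intro p hp
    simp only [Set.mem_setOf_eq, Real.dist_eq, sub_zero, not_lt] at hp
    rw [abs_of_nonneg (norm_nonneg _)] at hp
    have hdp : d p ≠ 0 := by
      intro h
      rw [h, norm_zero] at hp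
      linarith
    have hlt : p.2 < p.1 := by
      by_contra h
      apply hdp
      rw [hd]
      simp [h]
    refine Set.mem_biUnion (show p.1 ∈ {k | ε ≤ ‖a k‖} from le_trans hp (hd_le p)) ?_
    exact Set.mk_mem_prod rfl hlt
  have h1 : ∀ k, a k * β ^ k - a k * α ^ k = (∑' j, d (k, j)) * (β - α) := by
    intro k
    have hvanish : ∀ j ∉ Finset.range k, d (k, j) = 0 := by
      intro j hj
      rw [Finset.mem_range, not_lt] at hj
      rw [hd]
      simp [not_lt.mpr hj]
    rw [tsum_eq_sum hvanish]
    have : ∑ j ∈ Finset.range k, d (k, j)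
        = a k * ∑ j ∈ Finset.range k, β ^ j * α ^ (k - 1 - j) := by
      rw [Finset.mul_sum]
      apply Finset.sum_congr rfl
      intro j hj
      rw [Finset.mem_range] at hj
      rw [hd]
      simp only [hj, if_true]
      ring
    rw [this, mul_assoc, geom_sum₂_mul, mul_sub]
  have hcol : ∀ j, ∑' k, d (k, j) = (∑' i, a (j + 1 + i) * α ^ i) * β ^ j := by
    intro j
    have hinj : Function.Injective (fun i : ℕ => j + 1 + i) := add_right_injective (j + 1)
    have hsupp : Function.support (fun k => d (k, j)) ⊆ Set.range (fun i : ℕ => j + 1 + i) := by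
      intro k hk
      have hlt : j < k := by
        by_contra h
        apply hk
        rw [hd]
        simp [not_lt.mpr (not_lt.mp h)]
      exact ⟨k - j - 1, show j + 1 + (k - j - 1) = k by omega⟩
    rw [← hinj.tsum_eq hsupp]
    have : ∀ i : ℕ, d (j + 1 + i, j) = (a (j + 1 + i) * α ^ i) * β ^ j := by
      intro i
      rw [hd]
      have h1 : j < j + 1 + i := by omega
      have h2 : j + 1 + i - 1 - j = i := by omega
      simp only [h1, if_true, h2]
      ring
    rw [tsum_congr this, tsum_mul_right]
  calc (∑' k, a k * β ^ k) - (∑' k, a k * α ^ k)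
      = ∑' k, (a k * β ^ k - a k * α ^ k) :=
        (Summable.tsum_sub (hsummable β hβ) (hsummable α hα)).symm
    _ = ∑' k, (∑' j, d (k, j)) * (β - α) := tsum_congr h1
    _ = (∑' k, ∑' j, d (k, j)) * (β - α) := tsum_mul_right
    _ = (∑' j, ∑' k, d (k, j)) * (β - α) := by
        congr 1
        exact (Summable.tsum_comm (f := fun k j => d (k, j)) hd_sum).symm
    _ = (∑' j, (∑' i, a (j + 1 + i) * α ^ i) * β ^ j) * (β - α) := by
        rw [tsum_congr hcol]

private lemma strass_aux : ∀ (N : ℕ) (a : ℕ → K),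
    Tendsto (fun k => ‖a k‖) atTop (nhds 0) → a N ≠ 0 →
    (∀ k, ‖a k‖ ≤ ‖a N‖) → (∀ k, ‖a k‖ = ‖a N‖ → k ≤ N) →
    {α : K | ‖α‖ ≤ 1 ∧ HasSum (fun k => a k * α ^ k) 0}.Finite ∧
      {α : K | ‖α‖ ≤ 1 ∧ HasSum (fun k => a k * α ^ k) 0}.ncard ≤ N := by
  intro N
  induction N with
  | zero =>
    intro a ha h0 hle hmax
    have hApos : (0 : ℝ) < ‖a 0‖ := norm_pos_iff.mpr h0
    have hempty : {α : K | ‖α‖ ≤ 1 ∧ HasSum (fun k => a k * α ^ k) 0} = ∅ := by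
      rw [Set.eq_empty_iff_forall_notMem]
      rintro α ⟨hα1, hsum⟩
      have hs : Summable (fun k => a k * α ^ k) := hsum.summable
      have h := hsum.tsum_eq
      rw [Summable.tsum_eq_zero_add hs] at h
      have heq : a 0 * α ^ 0 = -(∑' k, a (k + 1) * α ^ (k + 1)) := by linear_combination h
      have hnorm : ‖a 0‖ = ‖∑' k, a (k + 1) * α ^ (k + 1)‖ := by
        have := congrArg norm heq
        rwa [pow_zero, mul_one, norm_neg] at this
      have hlt : ‖∑' k, a (k + 1) * α ^ (k + 1)‖ < ‖a 0‖ := by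
        apply strass_tsum_lt ?_ hApos
        · intro i
          have hle' : ‖a (i + 1) * α ^ (i + 1)‖ ≤ ‖a (i + 1)‖ := by
            rw [norm_mul]
            exact mul_le_of_le_one_right (norm_nonneg _)
              (by rw [norm_pow]; exact pow_le_one₀ (norm_nonneg _) hα1)
          refine lt_of_le_of_lt hle' (lt_of_le_of_ne (hle _) fun hc => ?_)
          exact Nat.succ_ne_zero i (Nat.le_zero.mp (hmax _ hc))
        · apply squeeze_zero (fun k => norm_nonneg _) (fun k => ?_)
            (ha.comp (tendsto_add_atTop_nat 1))
          rw [norm_mul]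
          exact mul_le_of_le_one_right (norm_nonneg _)
            (by rw [norm_pow]; exact pow_le_one₀ (norm_nonneg _) hα1)
      rw [hnorm] at hApos
      exact absurd hnorm (ne_of_gt (by linarith))
    rw [hempty]
    simp
  | succ n ih =>
    intro a ha h0 hle hmax
    set S : Set K := {α : K | ‖α‖ ≤ 1 ∧ HasSum (fun k => a k * α ^ k) 0} with hS
    rcases Set.eq_empty_or_nonempty S with hSe | ⟨α, hα1, hαsum⟩
    · rw [hSe]
      simp
    set A : ℝ := ‖a (n + 1)‖ with hA
    have hApos : 0 < A := norm_pos_iff.mpr h0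
    have hαpow : ∀ m : ℕ, ‖α ^ m‖ ≤ 1 := by
      intro m
      rw [norm_pow]
      exact pow_le_one₀ (norm_nonneg _) hα1
    have hterm_le : ∀ j i : ℕ, ‖a (j + 1 + i) * α ^ i‖ ≤ ‖a (j + 1 + i)‖ := by
      intro j i
      rw [norm_mul]
      exact mul_le_of_le_one_right (norm_nonneg _) (hαpow i)
    have htail_tendsto : ∀ j : ℕ, Tendsto (fun i => ‖a (j + 1 + i) * α ^ i‖) atTop (nhds 0) := by
      intro j
      apply squeeze_zero (fun i => norm_nonneg _) (fun i => hterm_le j i)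
      exact ha.comp (show Filter.Tendsto (fun i : ℕ => j + 1 + i) atTop atTop from (tendsto_add_atTop_nat (j + 1)).congr (fun i => by omega))
    set b : ℕ → K := fun j => ∑' i, a (j + 1 + i) * α ^ i with hb
    -- (i) ‖b j‖ ≤ A for all j
    have hb_le : ∀ j, ‖b j‖ ≤ A := by
      intro j
      apply IsUltrametricDist.norm_tsum_le_of_forall_le_of_nonneg hApos.le
      intro i
      exact le_trans (hterm_le j i) (hle _)
    -- (ii) ‖b j‖ < A for j > n
    have hb_lt : ∀ j, n < j → ‖b j‖ < A := by
      intro j hj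
      apply strass_tsum_lt (htail_tendsto j) hApos
      intro i
      refine lt_of_le_of_lt (hterm_le j i) (lt_of_le_of_ne (hle _) fun hc => ?_)
      have := hmax _ hc
      omega
    -- (iii) ‖b n‖ = A
    have hb_n : ‖b n‖ = A := by
      have hsumtail : Summable (fun i => a (n + 1 + i) * α ^ i) := by
        apply strass_summable_nat (htail_tendsto n)
      rw [hb]
      dsimp only
      rw [Summable.tsum_eq_zero_add hsumtail]
      have h0' : a (n + 1 + 0) * α ^ 0 = a (n + 1) := by simp
      have htail_lt : ‖∑' i, a (n + 1 + (i + 1)) * α ^ (i + 1)‖ < A := by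
        apply strass_tsum_lt ?_ hApos
        · intro i
          refine lt_of_le_of_lt ?_ (lt_of_le_of_ne (hle (n + 1 + (i + 1))) fun hc => ?_)
          · rw [norm_mul]
            exact mul_le_of_le_one_right (norm_nonneg _) (hαpow _)
          · have := hmax _ hc
            omega
        · apply squeeze_zero (fun i => norm_nonneg _) (fun i => ?_)
            (ha.comp (show Filter.Tendsto (fun i : ℕ => n + 1 + (i + 1)) atTop atTop from (tendsto_add_atTop_nat (n + 2)).congr (fun i => by omega)))
          rw [norm_mul]
          exact mul_le_of_le_one_right (norm_nonneg _) (hαpow _)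
      rw [h0']
      rw [IsUltrametricDist.norm_add_eq_max_of_norm_ne_norm (by
        intro hc
        rw [← hc] at htail_lt
        exact absurd rfl (ne_of_lt htail_lt))]
      rw [max_eq_left htail_lt.le]
    have hb_ne : b n ≠ 0 := by
      intro hc
      rw [hc, norm_zero] at hb_n
      exact absurd hb_n.symm (ne_of_gt hApos)
    -- (iv) ‖b j‖ → 0
    have hb_tendsto : Tendsto (fun j => ‖b j‖) atTop (nhds 0) := by
      rw [Metric.tendsto_atTop]
      intro ε hε
      obtain ⟨n₀, hn₀⟩ := (Metric.tendsto_atTop.mp ha) (ε / 2) (by linarith)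
      refine ⟨n₀, fun j hj => ?_⟩
      have hbj : ‖b j‖ ≤ ε / 2 := by
        apply IsUltrametricDist.norm_tsum_le_of_forall_le_of_nonneg (by linarith)
        intro i
        refine le_trans (hterm_le j i) ?_
        have := hn₀ (j + 1 + i) (by omega)
        rw [Real.dist_eq, sub_zero, abs_of_nonneg (norm_nonneg _)] at this
        exact this.le
      rw [Real.dist_eq, sub_zero, abs_of_nonneg (norm_nonneg _)]
      linarith
    -- apply induction hypothesis to b
    have hbmax : ∀ k, ‖b k‖ = ‖b n‖ → k ≤ n := by
      intro k hk
      by_contra h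
      have := hb_lt k (by omega)
      rw [hk, hb_n] at this
      exact absurd this (lt_irrefl A)
    obtain ⟨hbfin, hbcard⟩ := ih b hb_tendsto hb_ne
      (fun k => by rw [hb_n]; exact hb_le k) hbmax
    set Sb : Set K := {β : K | ‖β‖ ≤ 1 ∧ HasSum (fun j => b j * β ^ j) 0} with hSb
    have hsub : S ⊆ insert α Sb := by
      rintro β ⟨hβ1, hβsum⟩
      have hfac := strass_factor ha hα1 hβ1
      rw [hβsum.tsum_eq, hαsum.tsum_eq, sub_zero] at hfac
      have : (∑' j, b j * β ^ j) * (β - α) = 0 := by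
        rw [← hfac]
      rcases mul_eq_zero.mp this with hg | hβα
      · right
        refine ⟨hβ1, ?_⟩
        have hgsum : Summable (fun j => b j * β ^ j) := by
          apply strass_summable_nat
          apply squeeze_zero (fun j => norm_nonneg _) (fun j => ?_) hb_tendsto
          rw [norm_mul]
          exact mul_le_of_le_one_right (norm_nonneg _)
            (by rw [norm_pow]; exact pow_le_one₀ (norm_nonneg _) hβ1)
        rw [← hg]
        exact hgsum.hasSum
      · left
        have : β = α := by linear_combination hβα
        exact this
    have hSfin : S.Finite := (hbfin.insert α).subset hsub
    refine ⟨hSfin, ?_⟩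
    calc S.ncard ≤ (insert α Sb).ncard := Set.ncard_le_ncard hsub (hbfin.insert α)
      _ ≤ Sb.ncard + 1 := Set.ncard_insert_le α Sb
      _ ≤ n + 1 := by omega

end StrassmannAux

/-- **Strassmann's theorem.**
Let `K` be a field complete with respect to a nontrivial non-archimedean absolute value,
and let `f(T) = Σ_{k≥0} a k * T^k` be a power series over `K` with `‖a k‖ → 0` and not all
`a k` zero.  Let `A = max_k ‖a k‖` and `N = max {k | ‖a k‖ = A}`.  Then `f` has at most `N`
zeros `α ∈ K` with `‖α‖ ≤ 1`. -/
theorem strassmann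
    (K : Type*) [NontriviallyNormedField K] [IsUltrametricDist K] [CompleteSpace K]
    (a : ℕ → K) (ha : Tendsto (fun k => ‖a k‖) atTop (nhds 0))
    (A : ℝ) (hA : ∀ k, ‖a k‖ ≤ A)
    (N : ℕ) (hN : ‖a N‖ = A) (hNne : a N ≠ 0)
    (hNmax : ∀ k, ‖a k‖ = A → k ≤ N) :
    {α : K | ‖α‖ ≤ 1 ∧ HasSum (fun k => a k * α ^ k) 0}.Finite ∧
      {α : K | ‖α‖ ≤ 1 ∧ HasSum (fun k => a k * α ^ k) 0}.ncard ≤ N := by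
  subst hN
  exact strass_aux N a ha hNne hA hNmax
end

section
/- Let K be a field of characteristic 0, complete with respect to a non-archimedean absolute value |·|, with valuation ring 𝒪 = {α ∈ K : |α| ≤ 1}. Let f(T) ∈ 𝒪[T] be a monic polynomial and α ∈ an algebraic closure of K a root of f such that the extension K(α)/K is ramified. Then |f'(α)| < 1, where the absolute value is extended to the algebraic closure. -/
open Polynomial IsUltrametricDist Finset

section Aux
variable {E : Type*} [NormedField E] [IsUltrametricDist E]

lemma aux_norm_eval_le {Q : E[X]} {C : ℝ} (hC : ∀ i, ‖Q.coeff i‖ ≤ C)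
    {x : E} (hx : ‖x‖ ≤ 1) : ‖Q.eval x‖ ≤ C := by
  have hC0 : 0 ≤ C := le_trans (norm_nonneg _) (hC 0)
  rw [Polynomial.eval_eq_sum_range]
  refine norm_sum_le_of_forall_le_of_nonneg hC0 fun i _ => ?_
  rw [norm_mul, norm_pow]
  calc ‖Q.coeff i‖ * ‖x‖ ^ i ≤ C * 1 :=
        mul_le_mul (hC i) (pow_le_one₀ (norm_nonneg _) hx) (by positivity) hC0
    _ = C := mul_one C

lemma aux_norm_add_eq {a b : E} (h : ‖b‖ < ‖a‖) : ‖a + b‖ = ‖a‖ := by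
  rw [norm_add_eq_max_of_norm_ne_norm h.ne', max_eq_left h.le]

lemma aux_deriv_coeff_le {Q : E[X]} {C : ℝ} (hC : ∀ i, ‖Q.coeff i‖ ≤ C) (i : ℕ) :
    ‖Q.derivative.coeff i‖ ≤ C := by
  have hC0 : 0 ≤ C := le_trans (norm_nonneg _) (hC 0)
  rw [Polynomial.coeff_derivative, norm_mul]
  have h2 : ‖((i : E) + 1)‖ ≤ 1 := by
    have := IsUltrametricDist.norm_natCast_le_one E (i + 1)
    push_cast at this
    exact this
  calc ‖Q.coeff (i+1)‖ * ‖((i : E) + 1)‖ ≤ C * 1 :=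
        mul_le_mul (hC _) h2 (norm_nonneg _) hC0
    _ = C := mul_one C

lemma aux_taylor_coeff_le {Q : E[X]} {C : ℝ} (hC : ∀ i, ‖Q.coeff i‖ ≤ C)
    {x : E} (hx : ‖x‖ ≤ 1) (k : ℕ) : ‖(Polynomial.taylor x Q).coeff k‖ ≤ C := by
  have hC0 : 0 ≤ C := le_trans (norm_nonneg _) (hC 0)
  rw [Polynomial.taylor_coeff]
  refine aux_norm_eval_le (fun n => ?_) hx
  rw [Polynomial.hasseDeriv_coeff, norm_mul]
  calc ‖((n + k).choose k : E)‖ * ‖Q.coeff (n + k)‖ ≤ 1 * C :=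
        mul_le_mul (IsUltrametricDist.norm_natCast_le_one E _) (hC _) (norm_nonneg _) zero_le_one
    _ = C := one_mul C

/-- Taylor tail bound : subtracting the first `j` taylor terms leaves something of size
`≤ C * ‖d‖^j`. -/
lemma aux_taylor_tail {Q : E[X]} {C : ℝ} (hC : ∀ i, ‖Q.coeff i‖ ≤ C)
    {x d : E} (hx : ‖x‖ ≤ 1) (hd : ‖d‖ ≤ 1) (j : ℕ) :
    ‖Q.eval (x + d) - ∑ i ∈ Finset.range j, (Polynomial.taylor x Q).coeff i * d ^ i‖
      ≤ C * ‖d‖ ^ j := by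
  have hC0 : 0 ≤ C := le_trans (norm_nonneg _) (hC 0)
  have h1 : Q.eval (x + d) = (Polynomial.taylor x Q).eval d := by
    rw [Polynomial.taylor_eval, add_comm]
  set N := Q.natDegree + 1 + j with hN
  have hdeg : (Polynomial.taylor x Q).natDegree < N := by
    rw [Polynomial.natDegree_taylor]; omega
  have h2 : Q.eval (x + d) = ∑ i ∈ Finset.range N, (Polynomial.taylor x Q).coeff i * d ^ i := by
    rw [h1, Polynomial.eval_eq_sum_range' hdeg]
  rw [h2, ← Finset.sum_range_add_sum_Ico _ (by omega : j ≤ N), add_sub_cancel_left]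
  refine norm_sum_le_of_forall_le_of_nonneg (by positivity) fun i hi => ?_
  rw [Finset.mem_Ico] at hi
  rw [norm_mul, norm_pow]
  refine mul_le_mul (aux_taylor_coeff_le hC hx i) ?_ (by positivity) hC0
  exact pow_le_pow_of_le_one (norm_nonneg _) hd hi.1

lemma aux_taylor_bound {Q : E[X]} {C : ℝ} (hC : ∀ i, ‖Q.coeff i‖ ≤ C)
    {x d : E} (hx : ‖x‖ ≤ 1) (hd : ‖d‖ ≤ 1) :
    ‖Q.eval (x + d) - Q.eval x - Q.derivative.eval x * d‖ ≤ C * ‖d‖ ^ 2 := by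
  have := aux_taylor_tail hC hx hd 2
  rw [Finset.sum_range_succ, Finset.sum_range_one, Polynomial.taylor_coeff_zero,
    Polynomial.taylor_coeff_one, pow_zero, mul_one, pow_one] at this
  convert this using 2
  ring

lemma aux_lipschitz {Q : E[X]} {C : ℝ} (hC : ∀ i, ‖Q.coeff i‖ ≤ C)
    {x d : E} (hx : ‖x‖ ≤ 1) (hd : ‖d‖ ≤ 1) :
    ‖Q.eval (x + d) - Q.eval x‖ ≤ C * ‖d‖ := by
  have := aux_taylor_tail hC hx hd 1
  rw [Finset.sum_range_one, Polynomial.taylor_coeff_zero, pow_zero, mul_one, pow_one] at this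
  exact this

end Aux

section Div
variable {E : Type*} [NormedField E] [IsUltrametricDist E]

lemma aux_norm_sub_le_max (a b : E) : ‖a - b‖ ≤ max ‖a‖ ‖b‖ := by
  rw [sub_eq_add_neg]
  simpa using IsUltrametricDist.norm_add_le_max a (-b)

lemma aux_div_monic {p : E[X]} (hp : p.Monic) (hp1 : ∀ i, ‖p.coeff i‖ ≤ 1)
    (f : E[X]) (hf : ∀ i, ‖f.coeff i‖ ≤ 1) :
    ∃ Q R : E[X], f = Q * p + R ∧ R.degree < p.degree ∧
      (∀ i, ‖Q.coeff i‖ ≤ 1) ∧ (∀ i, ‖R.coeff i‖ ≤ 1) := by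
  generalize hn : f.natDegree = N
  induction N using Nat.strong_induction_on generalizing f with
  | _ N ih =>
    by_cases hdeg : f.degree < p.degree
    · exact ⟨0, f, by ring, hdeg, by simp, hf⟩
    push_neg at hdeg
    have hp0 : p ≠ 0 := hp.ne_zero
    have hf0 : f ≠ 0 := by
      rintro rfl
      rw [Polynomial.degree_zero] at hdeg
      exact (lt_irrefl _ (lt_of_le_of_lt hdeg (by
        rw [Polynomial.degree_eq_natDegree hp0]; exact WithBot.bot_lt_coe _)))
    have hplef : p.natDegree ≤ f.natDegree := Polynomial.natDegree_le_natDegree hdeg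
    set c := f.leadingCoeff with hc
    have hc0 : c ≠ 0 := Polynomial.leadingCoeff_ne_zero.2 hf0
    have hc1 : ‖c‖ ≤ 1 := hf _
    set k := f.natDegree - p.natDegree with hk
    set t : E[X] := p * X ^ k * C c with ht
    have htcoeff : ∀ i, ‖t.coeff i‖ ≤ 1 := by
      intro i
      rw [ht, Polynomial.coeff_mul_C, Polynomial.coeff_mul_X_pow', norm_mul]
      split
      · calc ‖p.coeff (i - k)‖ * ‖c‖ ≤ 1 * 1 :=
            mul_le_mul (hp1 _) hc1 (norm_nonneg _) zero_le_one
          _ = 1 := one_mul 1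
      · simpa using zero_le_one
    have hdegt : t.degree = f.degree := by
      rw [ht, Polynomial.degree_mul, Polynomial.degree_mul, Polynomial.degree_C hc0,
        Polynomial.degree_X_pow, Polynomial.degree_eq_natDegree hp0,
        Polynomial.degree_eq_natDegree hf0, add_zero, hk]
      norm_cast
      omega
    have hleadt : t.leadingCoeff = f.leadingCoeff := by
      rw [ht, Polynomial.leadingCoeff_mul, Polynomial.leadingCoeff_mul,
        Polynomial.leadingCoeff_C, Polynomial.leadingCoeff_X_pow, hp.leadingCoeff]
      simp [hc]
    set g : E[X] := f - t with hg
    have hgcoeff : ∀ i, ‖g.coeff i‖ ≤ 1 := by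
      intro i
      rw [hg, Polynomial.coeff_sub]
      exact le_trans (aux_norm_sub_le_max _ _) (max_le (hf i) (htcoeff i))
    by_cases hg0 : g = 0
    · refine ⟨C c * X ^ k, 0, ?_, ?_, ?_, by simp⟩
      · have : f = t := by rw [← sub_eq_zero]; exact hg0
        rw [this, ht]; ring
      · rw [Polynomial.degree_zero, Polynomial.degree_eq_natDegree hp0]
        exact WithBot.bot_lt_coe _
      · intro i
        rw [Polynomial.coeff_C_mul, Polynomial.coeff_X_pow, norm_mul]
        split
        · simpa using hc1
        · simpa using zero_le_one
    · have hdg : g.degree < f.degree := by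
        rw [hg]
        exact Polynomial.degree_sub_lt hdegt.symm hf0 hleadt.symm
      have hdgn : g.natDegree < N := by
        rw [← hn]
        exact Polynomial.natDegree_lt_natDegree hg0 hdg
      obtain ⟨Q₁, R, hfeq, hRdeg, hQ1, hR⟩ := ih g.natDegree hdgn g hgcoeff rfl
      refine ⟨Q₁ + C c * X ^ k, R, ?_, hRdeg, ?_, hR⟩
      · have : f = g + t := by rw [hg]; ring
        rw [this, hfeq, ht]; ring
      · intro i
        rw [Polynomial.coeff_add]
        refine le_trans (IsUltrametricDist.norm_add_le_max _ _) (max_le (hQ1 i) ?_)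
        rw [Polynomial.coeff_C_mul, Polynomial.coeff_X_pow, norm_mul]
        split
        · simpa using hc1
        · simpa using zero_le_one

end Div

section Hensel
variable {K L : Type*} [NontriviallyNormedField K] [CompleteSpace K]
  [NormedField L] [IsUltrametricDist L] [Algebra K L]

open Filter

lemma aux_eval_mem (F : IntermediateField K L) {Q : L[X]} (hQ : ∀ i, Q.coeff i ∈ F)
    {x : L} (hx : x ∈ F) : Q.eval x ∈ F := by
  rw [Polynomial.eval_eq_sum_range]
  exact sum_mem fun i _ => mul_mem (hQ i) (pow_mem hx i)

lemma aux_deriv_mem (F : IntermediateField K L) {Q : L[X]} (hQ : ∀ i, Q.coeff i ∈ F) :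
    ∀ i, Q.derivative.coeff i ∈ F := by
  intro i
  rw [Polynomial.coeff_derivative]
  refine mul_mem (hQ _) ?_
  have : ((i : L) + 1) = ((i + 1 : ℕ) : L) := by push_cast; ring
  rw [this]
  exact IntermediateField.natCast_mem F _

lemma hensel_aux (hext : ∀ x : K, ‖algebraMap K L x‖ = ‖x‖)
    (F : IntermediateField K L) [FiniteDimensional K F]
    {P : L[X]} (hP1 : ∀ i, ‖P.coeff i‖ ≤ 1) (hPF : ∀ i, P.coeff i ∈ F)
    {a : L} (haF : a ∈ F) (ha1 : ‖a‖ ≤ 1)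
    (hlt : ‖P.eval a‖ < 1) (hder : ‖P.derivative.eval a‖ = 1) :
    ∃ b, b ∈ F ∧ ‖b‖ ≤ 1 ∧ P.eval b = 0 ∧ ‖b - a‖ ≤ ‖P.eval a‖ := by
  letI : NormedSpace K L :=
    { norm_smul_le := fun c x => by rw [Algebra.smul_def, norm_mul, hext] }
  by_cases ht0 : P.eval a = 0
  · exact ⟨a, haF, ha1, ht0, by simp⟩
  set t := ‖P.eval a‖ with htdef
  have ht : 0 < t := norm_pos_iff.2 ht0
  have ht1 : t < 1 := hlt
  have hP'1 : ∀ i, ‖P.derivative.coeff i‖ ≤ 1 := aux_deriv_coeff_le hP1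
  -- Newton step
  have step : ∀ x : L, x ∈ F → ‖x‖ ≤ 1 → ‖P.derivative.eval x‖ = 1 → ‖P.eval x‖ ≤ t →
      (x - P.eval x / P.derivative.eval x) ∈ F ∧
      ‖x - P.eval x / P.derivative.eval x‖ ≤ 1 ∧
      ‖P.derivative.eval (x - P.eval x / P.derivative.eval x)‖ = 1 ∧
      ‖P.eval (x - P.eval x / P.derivative.eval x)‖ ≤ ‖P.eval x‖ ^ 2 ∧
      ‖(x - P.eval x / P.derivative.eval x) - x‖ = ‖P.eval x‖ := by
    intro x hxF hx1 hx'1 hxt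
    have hd'0 : P.derivative.eval x ≠ 0 := by
      intro h; rw [h, norm_zero] at hx'1; exact zero_ne_one hx'1
    set d : L := -(P.eval x / P.derivative.eval x) with hd
    have hxd : x - P.eval x / P.derivative.eval x = x + d := by rw [hd]; ring
    have hdnorm : ‖d‖ = ‖P.eval x‖ := by
      rw [hd, norm_neg, norm_div, hx'1, div_one]
    have hd1 : ‖d‖ ≤ 1 := by rw [hdnorm]; exact le_trans hxt (le_of_lt hlt)
    have hmemd : d ∈ F :=
      neg_mem (div_mem (aux_eval_mem F hPF hxF) (aux_eval_mem F (aux_deriv_mem F hPF) hxF))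
    have hmem : x + d ∈ F := add_mem hxF hmemd
    have hnorm : ‖x + d‖ ≤ 1 :=
      le_trans (IsUltrametricDist.norm_add_le_max x d) (max_le hx1 hd1)
    have hcancel : P.derivative.eval x * d = -(P.eval x) := by
      rw [hd, mul_neg, mul_div_cancel₀ _ hd'0]
    have htay := aux_taylor_bound hP1 hx1 hd1
    have heq : P.eval (x + d) - P.eval x - P.derivative.eval x * d = P.eval (x + d) := by
      rw [hcancel]; ring
    rw [heq, one_mul] at htay
    have hPx' : ‖P.eval (x + d)‖ ≤ ‖P.eval x‖ ^ 2 := by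
      rw [← hdnorm]; exact htay
    have hlip := aux_lipschitz hP'1 hx1 hd1
    rw [one_mul] at hlip
    have hder' : ‖P.derivative.eval (x + d)‖ = 1 := by
      have hrw : P.derivative.eval (x + d) =
          P.derivative.eval x + (P.derivative.eval (x + d) - P.derivative.eval x) := by ring
      rw [hrw, aux_norm_add_eq, hx'1]
      rw [hx'1]
      exact lt_of_le_of_lt hlip (lt_of_le_of_lt (by rw [hdnorm]; exact hxt) hlt)
    have hdisp : ‖(x + d) - x‖ = ‖P.eval x‖ := by
      rw [show (x + d) - x = d from by ring, hdnorm]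
    rw [hxd]
    exact ⟨hmem, hnorm, hder', hPx', hdisp⟩
  -- the Newton iteration sequence
  set s : ℕ → L := fun k => Nat.rec a (fun _ x => x - P.eval x / P.derivative.eval x) k with hs
  have hsrec : ∀ k, s (k + 1) = s k - P.eval (s k) / P.derivative.eval (s k) := fun k => rfl
  have inv : ∀ k, s k ∈ F ∧ ‖s k‖ ≤ 1 ∧ ‖P.derivative.eval (s k)‖ = 1 ∧
      ‖P.eval (s k)‖ ≤ t ^ (k + 1) ∧ ‖s k - a‖ ≤ t := by
    intro k
    induction k with
    | zero =>
      refine ⟨haF, ha1, hder, ?_, ?_⟩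
      · rw [show s 0 = a from rfl, pow_one]
      · rw [show s 0 = a from rfl]
        simpa using ht.le
    | succ k ihk =>
      obtain ⟨h1, h2, h3, h4, h5⟩ := ihk
      have hPt : ‖P.eval (s k)‖ ≤ t := by
        calc ‖P.eval (s k)‖ ≤ t ^ (k + 1) := h4
          _ ≤ t ^ 1 := pow_le_pow_of_le_one ht.le ht1.le (by omega)
          _ = t := pow_one t
      obtain ⟨g1, g2, g3, g4, g5⟩ := step (s k) h1 h2 h3 hPt
      rw [← hsrec] at g1 g2 g3 g4 g5
      refine ⟨g1, g2, g3, ?_, ?_⟩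
      · calc ‖P.eval (s (k + 1))‖ ≤ ‖P.eval (s k)‖ ^ 2 := g4
          _ ≤ (t ^ (k + 1)) ^ 2 := by
              exact pow_le_pow_left₀ (norm_nonneg _) h4 2
          _ = t ^ (2 * k + 2) := by ring
          _ ≤ t ^ (k + 1 + 1) := pow_le_pow_of_le_one ht.le ht1.le (by omega)
      · have : ‖s (k + 1) - a‖ ≤ max ‖s (k + 1) - s k‖ ‖s k - a‖ := by
          rw [show s (k + 1) - a = (s (k + 1) - s k) + (s k - a) from by ring]
          exact IsUltrametricDist.norm_add_le_max _ _
        refine le_trans this (max_le ?_ h5)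
        rw [g5]
        exact hPt
  have hcau : CauchySeq s := by
    apply cauchySeq_of_le_geometric t t ht1
    intro n
    have hPt : ‖P.eval (s n)‖ ≤ t := by
      calc ‖P.eval (s n)‖ ≤ t ^ (n + 1) := (inv n).2.2.2.1
        _ ≤ t ^ 1 := pow_le_pow_of_le_one ht.le ht1.le (by omega)
        _ = t := pow_one t
    rw [dist_eq_norm, norm_sub_rev,
      (step (s n) (inv n).1 (inv n).2.1 (inv n).2.2.1 hPt).2.2.2.2]
    calc ‖P.eval (s n)‖ ≤ t ^ (n + 1) := (inv n).2.2.2.1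
      _ = t * t ^ n := by ring
  haveI : FiniteDimensional K (Subalgebra.toSubmodule F.toSubalgebra) :=
    ‹FiniteDimensional K F›
  have hFcompl : IsComplete ((Subalgebra.toSubmodule F.toSubalgebra : Submodule K L) : Set L) :=
    Submodule.complete_of_finiteDimensional _
  obtain ⟨b, hbmem, hbtend⟩ := cauchySeq_tendsto_of_isComplete hFcompl
    (fun n => by simpa using (inv n).1) hcau
  have hbF : b ∈ F := by simpa using hbmem
  have hPb : P.eval b = 0 := by
    have h1 : Tendsto (fun k => P.eval (s k)) atTop (nhds (P.eval b)) :=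
      ((Polynomial.continuous P).tendsto b).comp hbtend
    have hgeom : Tendsto (fun n : ℕ => t ^ (n + 1)) atTop (nhds 0) :=
      (tendsto_pow_atTop_nhds_zero_of_lt_one ht.le ht1).comp (tendsto_add_atTop_nat 1)
    have h2 : Tendsto (fun k => P.eval (s k)) atTop (nhds 0) :=
      squeeze_zero_norm (fun n => (inv n).2.2.2.1) hgeom
    exact tendsto_nhds_unique h1 h2
  have hba : ‖b - a‖ ≤ t := by
    have hT : Tendsto (fun k => ‖s k - a‖) atTop (nhds ‖b - a‖) :=
      ((hbtend.sub tendsto_const_nhds).norm)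
    exact le_of_tendsto hT (Filter.Eventually.of_forall fun n => (inv n).2.2.2.2)
  have hb1 : ‖b‖ ≤ 1 := by
    have := IsUltrametricDist.norm_add_le_max a (b - a)
    rw [show a + (b - a) = b from by ring] at this
    exact le_trans this (max_le ha1 (le_trans hba ht1.le))
  exact ⟨b, hbF, hb1, hPb, hba⟩

end Hensel

/-- Let `K` be a field of characteristic `0`, complete with respect to a non-archimedean
absolute value, with valuation ring `𝒪 = {x : ‖x‖ ≤ 1}`.  Let `f ∈ 𝒪[T]` be a monic
polynomial and `α` a root of `f` in an extension `L` of `K` carrying the (unique) extension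
of the absolute value (e.g. an algebraic closure of `K`), such that `K(α)/K` is ramified,
i.e. the extension of value groups is nontrivial: some nonzero `y ∈ K(α)` has `‖y‖`
different from `‖x‖` for all `x ∈ K`.  Then `‖f'(α)‖ < 1`. -/
theorem norm_derivative_lt_one_of_ramified
    (K L : Type*) [NontriviallyNormedField K] [CompleteSpace K] [IsUltrametricDist K]
    [CharZero K] [NormedField L] [Algebra K L]
    (hext : ∀ x : K, ‖algebraMap K L x‖ = ‖x‖)
    (f : Polynomial K) (hmonic : f.Monic) (hcoeff : ∀ i, ‖f.coeff i‖ ≤ 1)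
    (α : L) (hroot : Polynomial.aeval α f = 0)
    (hram : ∃ y ∈ Algebra.adjoin K ({α} : Set L), y ≠ 0 ∧ ∀ x : K, ‖x‖ ≠ ‖y‖) :
    ‖Polynomial.aeval α f.derivative‖ < 1 := by
  classical
  haveI : IsUltrametricDist L := by
    apply isUltrametricDist_of_forall_norm_natCast_le_one
    intro n
    have h1 : ((n : L)) = algebraMap K L (n : K) := by
      rw [map_natCast]
    rw [h1, hext]
    exact IsUltrametricDist.norm_natCast_le_one K n
  set φ := algebraMap K L with hφ
  have hcm : ∀ (g : K[X]) (i : ℕ), ‖(g.map φ).coeff i‖ = ‖g.coeff i‖ := by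
    intro g i; rw [Polynomial.coeff_map, hext]
  have haev : ∀ g : K[X], Polynomial.aeval α g = (g.map φ).eval α := by
    intro g; rw [Polynomial.aeval_def, Polynomial.eval₂_eq_eval_map]
  set Fl : L[X] := f.map φ with hFl
  have hFl1 : ∀ i, ‖Fl.coeff i‖ ≤ 1 := fun i => by rw [hcm]; exact hcoeff i
  have hFlα : Fl.eval α = 0 := by rw [← haev]; exact hroot
  -- degree of f
  have hn1 : 1 ≤ f.natDegree := by
    by_contra h
    have h0 : f.natDegree = 0 := by omega
    have : f = 1 := (hmonic.natDegree_eq_zero).1 h0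
    rw [this] at hroot
    simp at hroot
  -- ‖α‖ ≤ 1
  have hα1 : ‖α‖ ≤ 1 := by
    by_contra hgt
    push_neg at hgt
    set n := f.natDegree with hn
    have hev : Fl.eval α = ∑ i ∈ Finset.range (n + 1), Fl.coeff i * α ^ i :=
      Polynomial.eval_eq_sum_range' (lt_of_le_of_lt Polynomial.natDegree_map_le (by omega)) α
    rw [Finset.sum_range_succ] at hev
    have hlead : Fl.coeff n = 1 := by
      rw [hFl, Polynomial.coeff_map, hmonic.coeff_natDegree]
      exact map_one φ
    rw [hFlα, hlead, one_mul] at hev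
    have hsum : ‖∑ i ∈ Finset.range n, Fl.coeff i * α ^ i‖ ≤ ‖α‖ ^ (n - 1) := by
      refine norm_sum_le_of_forall_le_of_nonneg (by positivity) fun i hi => ?_
      rw [Finset.mem_range] at hi
      rw [norm_mul, norm_pow]
      calc ‖Fl.coeff i‖ * ‖α‖ ^ i ≤ 1 * ‖α‖ ^ (n - 1) := by
            refine mul_le_mul (hFl1 i) ?_ (by positivity) zero_le_one
            exact pow_le_pow_right₀ (le_of_lt hgt) (by omega)
        _ = ‖α‖ ^ (n - 1) := one_mul _
    have heqn : ‖α‖ ^ n ≤ ‖α‖ ^ (n - 1) := by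
      have h2 : α ^ n = -∑ i ∈ Finset.range n, Fl.coeff i * α ^ i := by
        rw [eq_neg_iff_add_eq_zero]
        linear_combination hev.symm
      rw [← norm_pow, h2, norm_neg]
      exact hsum
    have : ‖α‖ ^ (n - 1) < ‖α‖ ^ n := pow_lt_pow_right₀ hgt (by omega)
    exact absurd heqn (not_le.2 this)
  -- suppose the conclusion fails
  by_contra hcon
  have hd1le : ‖Fl.derivative.eval α‖ ≤ 1 :=
    aux_norm_eval_le (aux_deriv_coeff_le hFl1) hα1
  have haevd : Polynomial.aeval α f.derivative = Fl.derivative.eval α := by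
    rw [haev, hFl, Polynomial.derivative_map]
  rw [haevd] at hcon
  have hder1 : ‖Fl.derivative.eval α‖ = 1 := le_antisymm hd1le (not_lt.1 hcon)
  -- α is integral
  have hαint : IsIntegral K α := ⟨f, hmonic, by rwa [← Polynomial.aeval_def]⟩
  set n₀ := (minpoly K α).natDegree with hn₀
  have hn₀pos : 0 < n₀ := minpoly.natDegree_pos hαint
  -- extract ramified element
  obtain ⟨y, hyadj, hy0, hyK⟩ := hram
  rw [Algebra.adjoin_singleton_eq_range_aeval] at hyadj
  obtain ⟨g₀, hg₀t⟩ := hyadj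
  have hg₀ : Polynomial.aeval α g₀ = y := hg₀t
  have hminmonic : (minpoly K α).Monic := minpoly.monic hαint
  set g₁ : K[X] := g₀ %ₘ minpoly K α with hg₁
  have hg₁y : Polynomial.aeval α g₁ = y := by
    have h := Polynomial.modByMonic_add_div g₀ (minpoly K α)
    have := congrArg (Polynomial.aeval α) h
    rw [map_add, map_mul, minpoly.aeval, zero_mul, add_zero] at this
    rw [hg₁, this]
    exact hg₀
  have hg₁0 : g₁ ≠ 0 := by
    intro h
    apply hy0
    rw [← hg₁y, h, map_zero]
  have hg₁deg : g₁.natDegree ≤ n₀ - 1 := by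
    have h1 : g₁.degree < (minpoly K α).degree := Polynomial.degree_modByMonic_lt g₀ hminmonic
    have h2 : g₁.natDegree < n₀ := by
      rw [hn₀]
      exact Polynomial.natDegree_lt_natDegree hg₁0 h1
    omega
  -- the sup norm of the coefficients of g₁
  set A := (Finset.range (g₁.natDegree + 1)).sup' Finset.nonempty_range_add_one
    (fun i => ‖g₁.coeff i‖) with hA
  obtain ⟨i₀, hi₀mem, hi₀⟩ := Finset.exists_mem_eq_sup' Finset.nonempty_range_add_one
    (fun i => ‖g₁.coeff i‖)
  have hAnn : 0 ≤ A := by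
    have h := Finset.le_sup' (fun i => ‖g₁.coeff i‖)
      (Finset.mem_range.2 (show 0 < g₁.natDegree + 1 by omega))
    exact le_trans (norm_nonneg _) h
  have hAx : ∀ i, ‖g₁.coeff i‖ ≤ A := by
    intro i
    by_cases hi : i ∈ Finset.range (g₁.natDegree + 1)
    · exact Finset.le_sup' (fun i => ‖g₁.coeff i‖) hi
    · rw [Finset.mem_range] at hi
      rw [Polynomial.coeff_eq_zero_of_natDegree_lt (by omega), norm_zero]
      exact hAnn
  set c := g₁.coeff i₀ with hc
  have hcA : ‖c‖ = A := hi₀.symm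
  have hc0 : c ≠ 0 := by
    intro h
    apply hg₁0
    ext i
    have := hAx i
    rw [← hcA, h, norm_zero] at this
    simpa using le_antisymm this (norm_nonneg _)
  have hApos : 0 < A := by rw [← hcA]; exact norm_pos_iff.2 hc0
  have hyA : ‖y‖ ≤ A := by
    rw [← hg₁y, haev]
    exact aux_norm_eval_le (fun i => by rw [hcm]; exact hAx i) hα1
  have hylt : ‖y‖ < A := lt_of_le_of_ne hyA (fun h => hyK c (hcA.trans h.symm))
  -- the minimal degree of a "primitive" polynomial that is small at α
  set Pred : ℕ → Prop := fun m => ∃ p : K[X], (∀ i, ‖p.coeff i‖ ≤ 1) ∧ (∃ i, ‖p.coeff i‖ = 1) ∧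
      p.natDegree ≤ m ∧ ‖(p.map φ).eval α‖ < 1 with hPreddef
  have hPw : Pred (n₀ - 1) := by
    refine ⟨Polynomial.C c⁻¹ * g₁, ?_, ⟨i₀, ?_⟩, ?_, ?_⟩
    · intro i
      rw [Polynomial.coeff_C_mul, norm_mul, norm_inv, hcA]
      calc A⁻¹ * ‖g₁.coeff i‖ ≤ A⁻¹ * A :=
            mul_le_mul_of_nonneg_left (hAx i) (by positivity)
        _ = 1 := inv_mul_cancel₀ (ne_of_gt hApos)
    · rw [Polynomial.coeff_C_mul, norm_mul, norm_inv, hcA]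
      exact inv_mul_cancel₀ (ne_of_gt hApos)
    · refine le_trans ?_ hg₁deg
      refine le_trans Polynomial.natDegree_mul_le ?_
      simp
    · rw [Polynomial.map_mul, Polynomial.map_C, Polynomial.eval_mul, Polynomial.eval_C,
        norm_mul, hext, norm_inv, hcA]
      have h5 : (g₁.map φ).eval α = y := by rw [← haev]; exact hg₁y
      rw [h5, inv_mul_eq_div, div_lt_one hApos]
      exact hylt
  have hPex : ∃ m, Pred m := ⟨n₀ - 1, hPw⟩
  set m := Nat.find hPex with hm
  have hPm : Pred m := Nat.find_spec hPex
  have hmle : m ≤ n₀ - 1 := Nat.find_le hPw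
  have hnot0 : ¬ Pred 0 := by
    rintro ⟨p, hp1, ⟨i, hpi⟩, hpd, hpe⟩
    have hpc : p = Polynomial.C (p.coeff 0) := Polynomial.eq_C_of_natDegree_le_zero hpd
    have hi0 : i = 0 := by
      by_contra hne
      rw [hpc, Polynomial.coeff_C, if_neg hne, norm_zero] at hpi
      exact zero_ne_one hpi
    rw [hi0] at hpi
    rw [hpc, Polynomial.map_C, Polynomial.eval_C, hext, hpi] at hpe
    exact lt_irrefl 1 hpe
  have hm1 : 1 ≤ m := by
    rcases Nat.eq_zero_or_pos m with h | h
    · exact absurd (h ▸ hPm) hnot0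
    · exact h
  have hmnot : ¬ Pred (m - 1) := Nat.find_min hPex (by omega)
  obtain ⟨p₀, hp₀1, ⟨iu, hiu⟩, hp₀d, hp₀e⟩ := hPm
  have hdeq : p₀.natDegree = m := by
    by_contra hne
    have : p₀.natDegree ≤ m - 1 := by omega
    exact hmnot ⟨p₀, hp₀1, ⟨iu, hiu⟩, this, hp₀e⟩
  have hlead1 : ‖p₀.coeff m‖ = 1 := by
    by_contra hne
    have hlt' : ‖p₀.coeff m‖ < 1 := lt_of_le_of_ne (hp₀1 m) hne
    apply hmnot
    have hiune : iu ≠ p₀.natDegree := by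
      intro h
      rw [h, hdeq] at hiu
      rw [hiu] at hlt'
      exact lt_irrefl 1 hlt'
    refine ⟨p₀.eraseLead, ?_, ⟨iu, ?_⟩, ?_, ?_⟩
    · intro i
      rw [Polynomial.eraseLead_coeff]
      split
      · simp
      · exact hp₀1 i
    · rw [Polynomial.eraseLead_coeff, if_neg hiune]
      exact hiu
    · exact le_trans (Polynomial.eraseLead_natDegree_le p₀) (by omega)
    · have h2 : p₀.eraseLead = p₀ - Polynomial.C p₀.leadingCoeff * Polynomial.X ^ p₀.natDegree := by
        linear_combination (Polynomial.eraseLead_add_C_mul_X_pow p₀)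
      rw [h2, Polynomial.map_sub, Polynomial.map_mul, Polynomial.map_C, Polynomial.map_pow,
        Polynomial.map_X, Polynomial.eval_sub, Polynomial.eval_mul, Polynomial.eval_C,
        Polynomial.eval_pow, Polynomial.eval_X]
      refine lt_of_le_of_lt (aux_norm_sub_le_max _ _) (max_lt hp₀e ?_)
      rw [norm_mul, hext, norm_pow]
      have hl : ‖p₀.leadingCoeff‖ < 1 := by
        rw [Polynomial.leadingCoeff, hdeq]; exact hlt'
      calc ‖p₀.leadingCoeff‖ * ‖α‖ ^ p₀.natDegree ≤ ‖p₀.leadingCoeff‖ * 1 :=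
            mul_le_mul_of_nonneg_left (pow_le_one₀ (norm_nonneg _) hα1) (norm_nonneg _)
        _ = ‖p₀.leadingCoeff‖ := mul_one _
        _ < 1 := hl
  set u := p₀.coeff m with hu
  have hu0 : u ≠ 0 := by
    intro h
    rw [h, norm_zero] at hlead1
    exact zero_ne_one hlead1
  set p1 : K[X] := Polynomial.C u⁻¹ * p₀ with hp1def
  have hp1monic : p1.Monic := by
    have h6 : p1.leadingCoeff = 1 := by
      rw [hp1def, Polynomial.leadingCoeff_mul, Polynomial.leadingCoeff_C,
        Polynomial.leadingCoeff, hdeq]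
      exact inv_mul_cancel₀ hu0
    exact h6
  have hp1deg : p1.natDegree = m := by
    rw [hp1def, Polynomial.natDegree_C_mul (inv_ne_zero hu0), hdeq]
  have hnu : ‖u⁻¹‖ = 1 := by rw [norm_inv, hlead1, inv_one]
  have hp11 : ∀ i, ‖p1.coeff i‖ ≤ 1 := by
    intro i
    rw [hp1def, Polynomial.coeff_C_mul, norm_mul, hnu, one_mul]
    exact hp₀1 i
  have hp1e : ‖(p1.map φ).eval α‖ < 1 := by
    rw [hp1def, Polynomial.map_mul, Polynomial.map_C, Polynomial.eval_mul, Polynomial.eval_C,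
      norm_mul, hext, hnu, one_mul]
    exact hp₀e
  -- divide f by p1 with controlled coefficients
  obtain ⟨Q, R, hfQR, hRdeg, hQ1, hR1⟩ := aux_div_monic hp1monic hp11 f hcoeff
  have hQev : ‖(Q.map φ).eval α‖ ≤ 1 :=
    aux_norm_eval_le (fun i => by rw [hcm]; exact hQ1 i) hα1
  have hev' : (R.map φ).eval α = -((Q.map φ).eval α * (p1.map φ).eval α) := by
    have h7 := congrArg (fun g : K[X] => (g.map φ).eval α) hfQR
    simp only [Polynomial.map_add, Polynomial.map_mul, Polynomial.eval_add,
      Polynomial.eval_mul] at h7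
    rw [← hFl] at h7
    rw [hFlα] at h7
    linear_combination -h7
  have hRα : ‖(R.map φ).eval α‖ < 1 := by
    rw [hev', norm_neg, norm_mul]
    calc ‖(Q.map φ).eval α‖ * ‖(p1.map φ).eval α‖ ≤ 1 * ‖(p1.map φ).eval α‖ :=
          mul_le_mul_of_nonneg_right hQev (norm_nonneg _)
      _ = ‖(p1.map φ).eval α‖ := one_mul _
      _ < 1 := hp1e
  have hRall : ∀ i, ‖R.coeff i‖ < 1 := by
    by_contra hex
    push_neg at hex
    obtain ⟨j, hj⟩ := hex
    have hj1 : ‖R.coeff j‖ = 1 := le_antisymm (hR1 j) hj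
    apply hmnot
    have hR0 : R ≠ 0 := by
      intro h
      rw [h, Polynomial.coeff_zero, norm_zero] at hj1
      exact zero_ne_one hj1
    have hRm : R.natDegree < m := by
      have h8 : R.natDegree < p1.natDegree := Polynomial.natDegree_lt_natDegree hR0 hRdeg
      omega
    exact ⟨R, hR1, ⟨j, hj1⟩, by omega, hRα⟩
  -- bound on the derivative of R at α
  have hRd : ‖(R.map φ).derivative.eval α‖ < 1 := by
    set tR := (Finset.range (R.natDegree + 1)).sup' Finset.nonempty_range_add_one
      (fun i => ‖R.coeff i‖) with htR
    have htR1 : tR < 1 := (Finset.sup'_lt_iff _).2 (fun i _ => hRall i)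
    have htRnn : 0 ≤ tR := by
      have h := Finset.le_sup' (fun i => ‖R.coeff i‖)
        (Finset.mem_range.2 (show 0 < R.natDegree + 1 by omega))
      exact le_trans (norm_nonneg _) h
    have htRall : ∀ i, ‖R.coeff i‖ ≤ tR := by
      intro i
      by_cases hi : i ∈ Finset.range (R.natDegree + 1)
      · exact Finset.le_sup' (fun i => ‖R.coeff i‖) hi
      · rw [Finset.mem_range] at hi
        rw [Polynomial.coeff_eq_zero_of_natDegree_lt (by omega), norm_zero]
        exact htRnn
    have hmap : ∀ i, ‖(R.map φ).coeff i‖ ≤ tR := fun i => by rw [hcm]; exact htRall i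
    exact lt_of_le_of_lt (aux_norm_eval_le (aux_deriv_coeff_le hmap) hα1) htR1
  -- the derivative identity forces ‖p1'(α)‖ = 1
  have hp1d : ‖(p1.map φ).derivative.eval α‖ = 1 := by
    have hle : ‖(p1.map φ).derivative.eval α‖ ≤ 1 :=
      aux_norm_eval_le (aux_deriv_coeff_le (fun i => by rw [hcm]; exact hp11 i)) hα1
    have hker : Fl.derivative.eval α =
        (Q.map φ).derivative.eval α * (p1.map φ).eval α +
        (Q.map φ).eval α * (p1.map φ).derivative.eval α +
        (R.map φ).derivative.eval α := by
      have h0 : Fl = Q.map φ * p1.map φ + R.map φ := by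
        rw [hFl, hfQR, Polynomial.map_add, Polynomial.map_mul]
      rw [h0, Polynomial.derivative_add, Polynomial.derivative_mul, Polynomial.eval_add,
        Polynomial.eval_add, Polynomial.eval_mul, Polynomial.eval_mul]
    by_contra hne
    have hlt2 : ‖(p1.map φ).derivative.eval α‖ < 1 := lt_of_le_of_ne hle hne
    have hQd : ‖(Q.map φ).derivative.eval α‖ ≤ 1 :=
      aux_norm_eval_le (aux_deriv_coeff_le (fun i => by rw [hcm]; exact hQ1 i)) hα1
    have t1 : ‖(Q.map φ).derivative.eval α * (p1.map φ).eval α‖ < 1 := by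
      rw [norm_mul]
      calc ‖(Q.map φ).derivative.eval α‖ * ‖(p1.map φ).eval α‖
          ≤ 1 * ‖(p1.map φ).eval α‖ := mul_le_mul_of_nonneg_right hQd (norm_nonneg _)
        _ = ‖(p1.map φ).eval α‖ := one_mul _
        _ < 1 := hp1e
    have t2 : ‖(Q.map φ).eval α * (p1.map φ).derivative.eval α‖ < 1 := by
      rw [norm_mul]
      calc ‖(Q.map φ).eval α‖ * ‖(p1.map φ).derivative.eval α‖
          ≤ 1 * ‖(p1.map φ).derivative.eval α‖ :=
            mul_le_mul_of_nonneg_right hQev (norm_nonneg _)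
        _ = ‖(p1.map φ).derivative.eval α‖ := one_mul _
        _ < 1 := hlt2
    have hfin : ‖Fl.derivative.eval α‖ < 1 := by
      rw [hker]
      refine lt_of_le_of_lt (IsUltrametricDist.norm_add_le_max _ _) (max_lt ?_ hRd)
      exact lt_of_le_of_lt (IsUltrametricDist.norm_add_le_max _ _) (max_lt t1 t2)
    rw [hder1] at hfin
    exact lt_irrefl 1 hfin
  -- first Hensel: find a root β of p1 near α
  haveI hFD1 : FiniteDimensional K (IntermediateField.adjoin K {α}) :=
    IntermediateField.adjoin.finiteDimensional hαint
  obtain ⟨β, hβF, hβ1, hβroot, hβdist⟩ := hensel_aux hext (IntermediateField.adjoin K {α})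
    (P := p1.map φ) (fun i => by rw [hcm]; exact hp11 i)
    (fun i => by rw [Polynomial.coeff_map]; exact IntermediateField.algebraMap_mem _ _)
    (IntermediateField.mem_adjoin_simple_self K α) hα1 hp1e hp1d
  have hβα : ‖β - α‖ < 1 := lt_of_le_of_lt hβdist hp1e
  have hβint : IsIntegral K β :=
    ⟨p1, hp1monic, by rw [Polynomial.eval₂_eq_eval_map]; exact hβroot⟩
  haveI hFD2 : FiniteDimensional K (IntermediateField.adjoin K {β}) :=
    IntermediateField.adjoin.finiteDimensional hβint
  -- f is small at β and its derivative is a unit there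
  have hFlβ : ‖Fl.eval β‖ < 1 := by
    have h9 := aux_lipschitz hFl1 hα1 (le_of_lt hβα)
    rw [one_mul, show α + (β - α) = β from by ring, hFlα, sub_zero] at h9
    exact lt_of_le_of_lt h9 hβα
  have hFdβ : ‖Fl.derivative.eval β‖ = 1 := by
    have hlip := aux_lipschitz (aux_deriv_coeff_le hFl1) hα1 (le_of_lt hβα)
    rw [one_mul, show α + (β - α) = β from by ring] at hlip
    have h10 : Fl.derivative.eval β =
        Fl.derivative.eval α + (Fl.derivative.eval β - Fl.derivative.eval α) := by ring
    rw [h10, aux_norm_add_eq, hder1]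
    rw [hder1]
    exact lt_of_le_of_lt hlip hβα
  -- second Hensel: find a root γ of f near β, inside K⟮β⟯
  obtain ⟨γ, hγF, hγ1, hγroot, hγdist⟩ := hensel_aux hext (IntermediateField.adjoin K {β})
    (P := Fl) hFl1
    (fun i => by rw [hFl, Polynomial.coeff_map]; exact IntermediateField.algebraMap_mem _ _)
    (IntermediateField.mem_adjoin_simple_self K β) hβ1 hFlβ hFdβ
  have hγα : ‖γ - α‖ < 1 := by
    rw [show γ - α = (γ - β) + (β - α) from by ring]
    exact lt_of_le_of_lt (IsUltrametricDist.norm_add_le_max _ _)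
      (max_lt (lt_of_le_of_lt hγdist hFlβ) hβα)
  -- by uniqueness of roots close to α, γ = α
  have hγeq : γ = α := by
    by_contra hne
    have hd0 : γ - α ≠ 0 := sub_ne_zero.2 hne
    have htay := aux_taylor_bound hFl1 hα1 (le_of_lt hγα)
    rw [one_mul, show α + (γ - α) = γ from by ring, hγroot, hFlα] at htay
    rw [sub_zero, zero_sub, norm_neg, norm_mul, hder1, one_mul] at htay
    have h11 : 0 < ‖γ - α‖ := norm_pos_iff.2 hd0
    nlinarith [hγα, h11, htay]
  have hαβ : α ∈ IntermediateField.adjoin K {β} := hγeq ▸ hγF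
  -- finrank contradiction
  have hle2 : IntermediateField.adjoin K {α} ≤ IntermediateField.adjoin K {β} :=
    IntermediateField.adjoin_simple_le_iff.2 hαβ
  have h1 : Module.finrank K (IntermediateField.adjoin K {α}) = n₀ := by
    rw [hn₀]; exact IntermediateField.adjoin.finrank hαint
  have h2 : Module.finrank K (IntermediateField.adjoin K {β}) = (minpoly K β).natDegree :=
    IntermediateField.adjoin.finrank hβint
  have h3 : (minpoly K β).natDegree ≤ m := by
    have hdvd : minpoly K β ∣ p1 := minpoly.dvd K β
      (by rw [Polynomial.aeval_def, Polynomial.eval₂_eq_eval_map]; exact hβroot)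
    calc (minpoly K β).natDegree ≤ p1.natDegree :=
        Polynomial.natDegree_le_of_dvd hdvd hp1monic.ne_zero
      _ = m := hp1deg
  have h4 : Module.finrank K (IntermediateField.adjoin K {α}) ≤
      Module.finrank K (IntermediateField.adjoin K {β}) :=
    LinearMap.finrank_le_finrank_of_injective
      (f := (IntermediateField.inclusion hle2).toLinearMap)
      (IntermediateField.inclusion_injective hle2)
  rw [h1, h2] at h4
  omega
end

section
/- Let K be a field of characteristic 0, complete with respect to a non-archimedean absolute value, and let f ∈ K[T] be a polynomial of degree n with leading coefficient of absolute value 1, all coefficients of absolute value at most 1, whose roots all lie in K. Suppose the distinct roots α₁, …, α_s of f (with multiplicities e₁, …, e_s) satisfy |α_i − α_j| = 1 for i ≠ j, and |f^{(e_i)}(α_i)/e_i!| = 1 for each i. Let g ∈ K[T] be a polynomial of degree n all of whose coefficients differ from the corresponding coefficients of f by elements of absolute value < 1. Then every root β of g in an algebraic closure of K satisfies |β − α_i| < 1 for exactly one index i, and for each i the number of roots β of g (counted with multiplicity) with |β − α_i| < 1 equals e_i. -/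
open Polynomial
open scoped Classical

lemma norm_sub_le_max' {L : Type*} [SeminormedAddCommGroup L] [IsUltrametricDist L] (a b : L) :
    ‖a - b‖ ≤ max ‖a‖ ‖b‖ := by
  rw [sub_eq_add_neg]
  exact (IsUltrametricDist.norm_add_le_max _ _).trans (by rw [norm_neg])

lemma aux_eval_le {L : Type*} [NormedField L] [IsUltrametricDist L]
    {p : L[X]} {c : ℝ} (hc : 0 ≤ c) (h : ∀ k, ‖p.coeff k‖ ≤ c) {x : L} (hx : ‖x‖ ≤ 1) :
    ‖p.eval x‖ ≤ c := by
  rw [Polynomial.eval_eq_sum_range]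
  refine IsUltrametricDist.norm_sum_le_of_forall_le_of_nonneg hc fun k _ => ?_
  rw [norm_mul, norm_pow]
  calc ‖p.coeff k‖ * ‖x‖ ^ k ≤ c * 1 ^ k := by
        exact mul_le_mul (h k) (pow_le_pow_left₀ (norm_nonneg x) hx k) (by positivity) hc
    _ = c := by ring

lemma aux_root_le {L : Type*} [NormedField L] [IsUltrametricDist L]
    {p : L[X]} (h1 : ‖p.leadingCoeff‖ = 1) (hcf : ∀ k, ‖p.coeff k‖ ≤ 1)
    {x : L} (hx : p.eval x = 0) : ‖x‖ ≤ 1 := by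
  by_contra hgt
  push_neg at hgt
  set N := p.natDegree with hN
  have hx0 : (0:ℝ) < ‖x‖ := lt_trans one_pos hgt
  rcases Nat.eq_zero_or_pos N with h0 | hpos
  · obtain ⟨a, rfl⟩ := Polynomial.natDegree_eq_zero.mp h0
    rw [Polynomial.eval_C] at hx
    rw [hx] at h1
    simp at h1
  · have hev : p.eval x = (∑ k ∈ Finset.range N, p.coeff k * x ^ k) + p.coeff N * x ^ N := by
      rw [Polynomial.eval_eq_sum_range, Finset.sum_range_succ]
    have h2 : ‖p.coeff N * x ^ N‖ = ‖x‖ ^ N := by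
      rw [norm_mul, norm_pow, ← Polynomial.leadingCoeff, h1, one_mul]
    have hlt : ‖∑ k ∈ Finset.range N, p.coeff k * x ^ k‖ < ‖p.coeff N * x ^ N‖ := by
      have hle : ‖∑ k ∈ Finset.range N, p.coeff k * x ^ k‖ ≤ ‖x‖ ^ (N - 1) := by
        refine IsUltrametricDist.norm_sum_le_of_forall_le_of_nonneg (by positivity) fun k hk => ?_
        have hk' := Finset.mem_range.mp hk
        rw [norm_mul, norm_pow]
        calc ‖p.coeff k‖ * ‖x‖ ^ k ≤ 1 * ‖x‖ ^ (N-1) := by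
              refine mul_le_mul (hcf k) (pow_le_pow_right₀ (le_of_lt hgt) ?_) (by positivity)
                one_pos.le
              omega
          _ = ‖x‖ ^ (N-1) := one_mul _
      rw [h2]
      exact lt_of_le_of_lt hle (pow_lt_pow_right₀ hgt (by omega))
    have := IsUltrametricDist.norm_add_eq_max_of_norm_ne_norm (ne_of_lt hlt)
    rw [← hev, hx] at this
    rw [norm_zero, max_eq_right (le_of_lt hlt)] at this
    rw [h2] at this
    exact (pow_pos hx0 N).ne' this.symm

/-- **Continuity of roots over a complete non-archimedean field.**
Let `K` be complete non-archimedean of characteristic `0`, and `f ∈ K[T]` of degree `n`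
with `‖leading coeff‖ = 1`, all coefficients of norm `≤ 1`, and all roots in `K`: the
distinct roots are `α i` (`i : Fin s`) with multiplicities `e i`, so that
`f = lc · ∏ (T - α i)^(e i)`.  Assume `‖α i - α j‖ = 1` for `i ≠ j` and
`‖f^{(e i)}(α i)/(e i)!‖ = 1` for all `i`.  Let `g` be of degree `n` with `‖f - g‖ < 1`
coefficientwise.  Then, in an algebraically closed normed extension `L` of `K` (extending
the absolute value), every root `β` of `g` satisfies `‖β - α i‖ < 1` for exactly one `i`,
and for each `i` the number of roots `β` of `g` (with multiplicity) with `‖β - α i‖ < 1`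
is `e i`. -/
theorem roots_of_nearby_polynomial
    (K L : Type*) [NontriviallyNormedField K] [CompleteSpace K] [IsUltrametricDist K]
    [CharZero K] [NormedField L] [Algebra K L] [IsAlgClosed L]
    (hext : ∀ x : K, ‖algebraMap K L x‖ = ‖x‖)
    (n s : ℕ) (f g : Polynomial K) (α : Fin s → K) (e : Fin s → ℕ)
    (hf : f = C f.leadingCoeff * ∏ i, (X - C (α i)) ^ e i)
    (hdegf : f.natDegree = n)
    (hlead : ‖f.leadingCoeff‖ = 1)
    (hcoeff : ∀ k, ‖f.coeff k‖ ≤ 1)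
    (hapart : ∀ i j, i ≠ j → ‖α i - α j‖ = 1)
    (hderiv : ∀ i, ‖(Polynomial.derivative^[e i] f).eval (α i) / ((e i).factorial : K)‖ = 1)
    (hdegg : g.natDegree = n) (hgn : g.coeff n ≠ 0)
    (hclose : ∀ k, ‖f.coeff k - g.coeff k‖ < 1) :
    (∀ β ∈ (g.map (algebraMap K L)).roots,
        ∃! i : Fin s, ‖β - algebraMap K L (α i)‖ < 1) ∧
      ∀ i : Fin s,
        (Multiset.filter (fun β => ‖β - algebraMap K L (α i)‖ < 1)
            (g.map (algebraMap K L)).roots).card = e i := by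
  set φ := algebraMap K L with hφ
  have hφinj : Function.Injective φ := (algebraMap K L).injective
  -- L is ultrametric
  have ultra : IsUltrametricDist L := by
    refine IsUltrametricDist.isUltrametricDist_of_forall_norm_natCast_le_one fun m => ?_
    rw [show ((m : ℕ) : L) = φ (m : K) from (map_natCast φ m).symm, hext]
    exact IsUltrametricDist.norm_natCast_le_one K m
  set G := g.map φ with hG
  set M := G.roots with hM
  have hlc0 : f.leadingCoeff ≠ 0 := by
    intro h; rw [h] at hlead; simp at hlead
  have hf0 : f ≠ 0 := leadingCoeff_ne_zero.mp hlc0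
  -- sum of multiplicities
  have hsum : ∑ i, e i = n := by
    have : f.natDegree = ∑ i, e i := by
      conv_lhs => rw [hf]
      rw [natDegree_C_mul hlc0, natDegree_prod]
      · simp [natDegree_pow, natDegree_X_sub_C]
      · intro i _
        exact pow_ne_zero _ (X_sub_C_ne_zero _)
    omega
  have hg0 : g ≠ 0 := fun h => hgn (by simp [h])
  have hG0 : G ≠ 0 := by
    simpa [hG] using (Polynomial.map_ne_zero_iff hφinj).mpr hg0
  have hGdeg : G.natDegree = n := by
    rw [hG, natDegree_map_eq_of_injective hφinj, hdegg]
  -- coefficient facts for g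
  have hfn : ‖f.coeff n‖ = 1 := by
    rw [← hdegf, ← Polynomial.leadingCoeff]; exact hlead
  have hgcoeff : ∀ k, ‖g.coeff k‖ ≤ 1 := by
    intro k
    have : g.coeff k = f.coeff k - (f.coeff k - g.coeff k) := by ring
    rw [this]
    refine le_trans (norm_sub_le_max' _ _) (max_le (hcoeff k) (hclose k).le)
  have hgn1 : ‖g.coeff n‖ = 1 := by
    have hne : ‖g.coeff n - f.coeff n‖ ≠ ‖f.coeff n‖ := by
      rw [norm_sub_rev, hfn]; exact (hclose n).ne
    have := IsUltrametricDist.norm_add_eq_max_of_norm_ne_norm hne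
    rw [sub_add_cancel] at this
    rw [this, norm_sub_rev, hfn]
    exact max_eq_right (hclose n).le
  have hGlead : ‖G.leadingCoeff‖ = 1 := by
    rw [hG, Polynomial.leadingCoeff_map_of_leadingCoeff_ne_zero φ
      (by rw [Polynomial.leadingCoeff, hdegg]; exact fun h => hgn (by simpa using h)), hext,
      Polynomial.leadingCoeff, hdegg]
    exact hgn1
  have hGcoeff : ∀ k, ‖G.coeff k‖ ≤ 1 := by
    intro k; rw [hG, coeff_map, hext]; exact hgcoeff k
  -- bound on evaluations of f - g
  set c : ℝ := Finset.sup' (Finset.range (n+1)) (by exact ⟨0, Finset.mem_range.mpr (Nat.succ_pos n)⟩)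
    (fun k => ‖f.coeff k - g.coeff k‖) with hc
  have hc0 : 0 ≤ c := by
    rw [hc]
    exact le_trans (norm_nonneg (f.coeff 0 - g.coeff 0))
      (Finset.le_sup' (fun k => ‖f.coeff k - g.coeff k‖)
        (Finset.mem_range.mpr (Nat.succ_pos n)))
  have hc1 : c < 1 := by
    rw [hc]
    exact (Finset.sup'_lt_iff _).mpr fun k _ => hclose k
  have hcmem : ∀ k, ‖f.coeff k - g.coeff k‖ ≤ c := by
    intro k
    rcases le_or_gt k n with hk | hk
    · rw [hc]
      exact Finset.le_sup' (fun k => ‖f.coeff k - g.coeff k‖)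
        (Finset.mem_range.mpr (by omega))
    · have h1 : (f - g).natDegree < k := by
        refine lt_of_le_of_lt (Polynomial.natDegree_sub_le f g) ?_
        rw [hdegf, hdegg]; omega
      have := Polynomial.coeff_eq_zero_of_natDegree_lt h1
      rw [Polynomial.coeff_sub] at this
      rw [this, norm_zero]; exact hc0
  set F := f.map φ with hF
  have hFG : ∀ x : L, ‖x‖ ≤ 1 → ‖F.eval x - G.eval x‖ ≤ c := by
    intro x hx
    have heq : F.eval x - G.eval x = ((f - g).map φ).eval x := by
      rw [Polynomial.map_sub, Polynomial.eval_sub]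
    rw [heq]
    refine aux_eval_le hc0 (fun k => ?_) hx
    rw [Polynomial.coeff_map, hext, Polynomial.coeff_sub]
    exact hcmem k
  -- factorization of F over L
  have hFfact : F = C (φ f.leadingCoeff) * ∏ i, (X - C (φ (α i))) ^ e i := by
    rw [hF]
    conv_lhs => rw [hf]
    rw [Polynomial.map_mul, Polynomial.map_C, Polynomial.map_prod]
    congr 1
    refine Finset.prod_congr rfl fun i _ => ?_
    rw [Polynomial.map_pow, Polynomial.map_sub, Polynomial.map_X, Polynomial.map_C]
  have hFeval : ∀ x : L, ‖F.eval x‖ = ∏ i, ‖x - φ (α i)‖ ^ e i := by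
    intro x
    rw [hFfact]
    rw [Polynomial.eval_mul, Polynomial.eval_C, Polynomial.eval_prod, norm_mul, hext, hlead,
      one_mul]
    rw [norm_prod]
    refine Finset.prod_congr rfl fun i _ => ?_
    rw [Polynomial.eval_pow, Polynomial.eval_sub, Polynomial.eval_X, Polynomial.eval_C, norm_pow]
  rcases Nat.eq_zero_or_pos n with hn0 | hn
  · -- degenerate case n = 0 : no roots
    have hM0 : M = 0 := by
      have h1 : M.card ≤ G.natDegree := Polynomial.card_roots' G
      rw [hGdeg, hn0] at h1
      exact Multiset.card_eq_zero.mp (Nat.le_zero.mp h1)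
    constructor
    · intro β hβ
      rw [hM0] at hβ
      simp at hβ
    · intro i
      have hei : e i = 0 := by
        have := Finset.single_le_sum (f := e) (fun j _ => Nat.zero_le _) (Finset.mem_univ i)
        omega
      rw [hM0, hei]
      simp
  · -- main case n > 0
    -- all α i have norm at most 1
    have hα : ∀ i, ‖α i‖ ≤ 1 := by
      obtain ⟨j, hj⟩ : ∃ j, e j ≠ 0 := by
        by_contra hno
        push_neg at hno
        rw [Finset.sum_eq_zero (fun i _ => hno i)] at hsum
        omega
      have hfj : f.eval (α j) = 0 := by
        rw [hf, Polynomial.eval_mul, Polynomial.eval_prod]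
        refine mul_eq_zero_of_right _ (Finset.prod_eq_zero (Finset.mem_univ j) ?_)
        rw [Polynomial.eval_pow, Polynomial.eval_sub, Polynomial.eval_X, Polynomial.eval_C,
          sub_self, zero_pow hj]
      have hαj : ‖α j‖ ≤ 1 := aux_root_le hlead hcoeff hfj
      intro i
      rcases eq_or_ne i j with rfl | hij
      · exact hαj
      · calc ‖α i‖ = ‖(α i - α j) + α j‖ := by ring_nf
          _ ≤ max ‖α i - α j‖ ‖α j‖ := IsUltrametricDist.norm_add_le_max _ _
          _ ≤ 1 := max_le (le_of_eq (hapart i j hij)) hαj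
    -- part 1
    have part1 : ∀ β ∈ M, ∃! i : Fin s, ‖β - φ (α i)‖ < 1 := by
      intro β hβ
      have hGβ : G.eval β = 0 := by
        exact (Polynomial.mem_roots hG0).mp hβ
      have hβ1 : ‖β‖ ≤ 1 := aux_root_le hGlead hGcoeff hGβ
      have hdist : ∀ i, ‖β - φ (α i)‖ ≤ 1 := by
        intro i
        refine (norm_sub_le_max' _ _).trans (max_le hβ1 ?_)
        rw [hext]; exact hα i
      have hFβ : ‖F.eval β‖ ≤ c := by
        have := hFG β hβ1
        rwa [hGβ, sub_zero] at this
      obtain ⟨i, hi⟩ : ∃ i, ‖β - φ (α i)‖ < 1 := by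
        by_contra hno
        push_neg at hno
        have h1 : ∏ i, ‖β - φ (α i)‖ ^ e i = 1 :=
          Finset.prod_eq_one fun i _ => by
            rw [le_antisymm (hdist i) (hno i), one_pow]
        rw [hFeval β, h1] at hFβ
        exact absurd (lt_of_le_of_lt hFβ hc1) (lt_irrefl 1)
      refine ⟨i, hi, fun j hjlt => ?_⟩
      by_contra hji
      have : ‖α j - α i‖ < 1 := by
        rw [← hext, map_sub]
        calc ‖φ (α j) - φ (α i)‖ = ‖(φ (α j) - β) + (β - φ (α i))‖ := by ring_nf
          _ ≤ max ‖φ (α j) - β‖ ‖β - φ (α i)‖ := IsUltrametricDist.norm_add_le_max _ _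
          _ < 1 := max_lt (by rw [norm_sub_rev]; exact hjlt) hi
      exact absurd (hapart j i hji) (ne_of_lt this)
    refine ⟨part1, ?_⟩
    intro i
    set M1 := M.filter (fun β => ‖β - φ (α i)‖ < 1) with hM1
    set M2 := M.filter (fun β => ¬ ‖β - φ (α i)‖ < 1) with hM2
    -- the max distance of nearby roots
    set A : Finset ℝ := insert (0:ℝ) (M1.map fun β => ‖β - φ (α i)‖).toFinset with hA
    have hAne : A.Nonempty := ⟨0, Finset.mem_insert_self _ _⟩
    set u0 := A.max' hAne with hu0
    have hu0lt : u0 < 1 := by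
      rw [hu0]
      refine (Finset.max'_lt_iff _ hAne).mpr fun b hb => ?_
      rcases Finset.mem_insert.mp hb with rfl | hb'
      · exact one_pos
      · obtain ⟨β, hβ, rfl⟩ := Multiset.mem_map.mp (Multiset.mem_toFinset.mp hb')
        exact (Multiset.mem_filter.mp hβ).2
    have hu0ge : ∀ β ∈ M1, ‖β - φ (α i)‖ ≤ u0 := by
      intro β hβ
      rw [hu0]
      exact Finset.le_max' A ‖β - φ (α i)‖ (Finset.mem_insert_of_mem
        (Multiset.mem_toFinset.mpr (Multiset.mem_map_of_mem (fun β => ‖β - φ (α i)‖) hβ)))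
    -- the n-th root of c
    set cpow : ℝ := c ^ ((n : ℝ)⁻¹) with hcpow
    have hcpow0 : 0 ≤ cpow := Real.rpow_nonneg hc0 _
    have hcpow1 : cpow < 1 := Real.rpow_lt_one hc0 hc1 (by positivity)
    have hcpowpow : cpow ^ n = c := by
      rw [hcpow, ← Real.rpow_natCast (c ^ ((n:ℝ)⁻¹)) n, ← Real.rpow_mul hc0,
        inv_mul_cancel₀ (by exact_mod_cast hn.ne'), Real.rpow_one]
    set u : ℝ := max u0 (max cpow 2⁻¹) with hu
    have hu1 : u < 1 := max_lt hu0lt (max_lt hcpow1 (by norm_num))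
    have hupos : (0:ℝ) < u :=
      lt_of_lt_of_le (by norm_num) (le_max_of_le_right (le_max_right cpow 2⁻¹))
    -- find an element t of L with u < ‖t‖ < 1
    obtain ⟨x, hx⟩ := NormedField.exists_one_lt_norm K
    have hinv : 1 < u⁻¹ := (one_lt_inv₀ hupos).mpr hu1
    obtain ⟨m0, hm0⟩ := pow_unbounded_of_one_lt ‖x‖ hinv
    have hm0pos : 0 < m0 := by
      rcases Nat.eq_zero_or_pos m0 with rfl | h
      · rw [pow_zero] at hm0; linarith
      · exact h
    obtain ⟨y, hy⟩ := IsAlgClosed.exists_root (X ^ m0 - C (φ x))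
      (by rw [Polynomial.degree_X_pow_sub_C hm0pos]; exact_mod_cast hm0pos.ne')
    have hy' : y ^ m0 = φ x := by
      rw [Polynomial.IsRoot.def, Polynomial.eval_sub, Polynomial.eval_pow, Polynomial.eval_X,
        Polynomial.eval_C, sub_eq_zero] at hy
      exact hy
    have hynorm : ‖y‖ ^ m0 = ‖x‖ := by rw [← norm_pow, hy', hext]
    have hy1 : 1 < ‖y‖ := by
      by_contra hle
      push_neg at hle
      have := pow_le_one₀ (norm_nonneg y) hle (n := m0)
      rw [hynorm] at this
      linarith
    have hylt : ‖y‖ < u⁻¹ := by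
      by_contra hge
      push_neg at hge
      have := pow_le_pow_left₀ (by positivity) hge m0
      rw [hynorm] at this
      linarith
    set t : L := y⁻¹ with ht
    have hrdef : ‖t‖ = ‖y‖⁻¹ := norm_inv y
    have hru : u < ‖t‖ := by
      rw [hrdef]
      rw [show u = (u⁻¹)⁻¹ by rw [inv_inv]]
      exact inv_strictAnti₀ (by positivity) hylt
    have hr1 : ‖t‖ < 1 := by
      rw [hrdef]
      exact inv_lt_one_of_one_lt₀ hy1
    have hr0 : (0:ℝ) < ‖t‖ := lt_trans hupos hru
    -- the test point γ
    set γ : L := φ (α i) + t with hγ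
    have hγi : ‖γ - φ (α i)‖ = ‖t‖ := by rw [hγ, add_sub_cancel_left]
    have hγ1 : ‖γ‖ ≤ 1 := by
      rw [hγ]
      refine (IsUltrametricDist.norm_add_le_max _ _).trans (max_le ?_ hr1.le)
      rw [hext]; exact hα i
    have hγj : ∀ j, j ≠ i → ‖γ - φ (α j)‖ = 1 := by
      intro j hji
      have heq : γ - φ (α j) = φ (α i - α j) + t := by rw [map_sub, hγ]; ring
      rw [heq, IsUltrametricDist.norm_add_eq_max_of_norm_ne_norm
        (by rw [hext, hapart i j (fun h => hji h.symm)]; exact hr1.ne'),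
        hext, hapart i j (fun h => hji h.symm)]
      exact max_eq_left hr1.le
    -- evaluation of F at γ
    have hFγ : ‖F.eval γ‖ = ‖t‖ ^ e i := by
      rw [hFeval γ, Finset.prod_eq_single i
        (fun j _ hji => by rw [hγj j hji, one_pow])
        (fun h => absurd (Finset.mem_univ i) h), hγi]
    -- evaluation of G at γ
    have hGγ : ‖G.eval γ‖ = ‖t‖ ^ M1.card := by
      have hsplitG : G = C G.leadingCoeff * (M.map fun a => X - C a).prod :=
        (IsAlgClosed.splits G).eq_prod_roots
      have h2 : G.eval γ = G.leadingCoeff * (M.map fun a => γ - a).prod := by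
        conv_lhs => rw [hsplitG]
        rw [Polynomial.eval_mul, Polynomial.eval_C, Polynomial.eval_multiset_prod,
          Multiset.map_map]
        congr 2
        refine Multiset.map_congr rfl fun a _ => ?_
        simp
      have hnp : ∀ (S : Multiset L), ‖S.prod‖ = (S.map fun z => ‖z‖).prod := fun S => by
        simpa using map_multiset_prod (normHom : L →*₀ ℝ) S
      rw [h2, norm_mul, hGlead, one_mul, hnp, Multiset.map_map]
      show ((M.map fun a => ‖γ - a‖)).prod = ‖t‖ ^ M1.card
      have hMsplit : M1 + M2 = M := Multiset.filter_add_not _ M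
      rw [← hMsplit, Multiset.map_add, Multiset.prod_add]
      have hpart1 : ((M1.map fun a => ‖γ - a‖)).prod = ‖t‖ ^ M1.card := by
        have hrep : (M1.map fun a => ‖γ - a‖) = Multiset.replicate M1.card ‖t‖ := by
          refine Multiset.eq_replicate.mpr ⟨by rw [Multiset.card_map], fun b hb => ?_⟩
          obtain ⟨β, hβ, rfl⟩ := Multiset.mem_map.mp hb
          obtain ⟨hβM, hβnear⟩ := Multiset.mem_filter.mp hβ
          have hβsmall : ‖β - φ (α i)‖ < ‖t‖ :=
            (hu0ge β hβ).trans_lt ((le_max_left u0 (max cpow 2⁻¹)).trans_lt hru)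
          have heq : γ - β = t + (φ (α i) - β) := by rw [hγ]; ring
          rw [heq, IsUltrametricDist.norm_add_eq_max_of_norm_ne_norm
            (by rw [norm_sub_rev]; exact hβsmall.ne')]
          rw [norm_sub_rev]
          exact max_eq_left hβsmall.le
        rw [hrep, Multiset.prod_replicate]
      have hpart2 : ((M2.map fun a => ‖γ - a‖)).prod = 1 := by
        refine Multiset.prod_eq_one fun b hb => ?_
        obtain ⟨β, hβ, rfl⟩ := Multiset.mem_map.mp hb
        obtain ⟨hβM, hβfar⟩ := Multiset.mem_filter.mp hβ
        obtain ⟨j, hj, -⟩ := part1 β hβM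
        have hji : j ≠ i := fun h => hβfar (h ▸ hj)
        have heq : γ - β = (γ - φ (α j)) + (φ (α j) - β) := by ring
        rw [heq, IsUltrametricDist.norm_add_eq_max_of_norm_ne_norm
          (by rw [hγj j hji, norm_sub_rev]; exact hj.ne'), hγj j hji, norm_sub_rev]
        exact max_eq_left hj.le
      rw [hpart1, hpart2, mul_one]
    -- conclusion
    have hei_le : e i ≤ n :=
      hsum ▸ Finset.single_le_sum (f := e) (fun j _ => Nat.zero_le _) (Finset.mem_univ i)
    have hcr : c < ‖t‖ ^ e i := by
      calc c = cpow ^ n := hcpowpow.symm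
        _ < ‖t‖ ^ n := by
            refine pow_lt_pow_left₀ ?_ hcpow0 hn.ne'
            exact lt_of_le_of_lt ((le_max_left cpow 2⁻¹).trans (le_max_right u0 _)) hru
        _ ≤ ‖t‖ ^ e i := pow_le_pow_of_le_one hr0.le hr1.le hei_le
    have hfin : ‖t‖ ^ M1.card = ‖t‖ ^ e i := by
      by_contra hne
      have h3 : ‖F.eval γ - G.eval γ‖ = max (‖t‖ ^ e i) (‖t‖ ^ M1.card) := by
        rw [sub_eq_add_neg, IsUltrametricDist.norm_add_eq_max_of_norm_ne_norm
          (by rw [norm_neg, hFγ, hGγ]; exact fun h => hne h.symm), norm_neg, hFγ, hGγ]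
      have h4 := hFG γ hγ1
      rw [h3] at h4
      exact absurd (lt_of_lt_of_le hcr ((le_max_left _ _).trans h4)) (lt_irrefl c)
    by_contra hne
    rcases lt_or_gt_of_ne hne with hlt | hgt
    · exact absurd hfin.symm (ne_of_lt (pow_lt_pow_right_of_lt_one₀ hr0 hr1 hlt))
    · exact absurd hfin (ne_of_lt (pow_lt_pow_right_of_lt_one₀ hr0 hr1 hgt))
end

section
/- Let K be a number field of degree d, let m ≥ 1, and let Δ(T) ∈ 𝒪_K[T] be a monic polynomial of degree m. There exists a constant κ ≥ 1 (depending only on K and Δ) such that for every 0 < ε ≤ 1 and every τ ∈ 𝒪_K with Δ(τ) ≠ 0 and size(τ) := max_{v|∞} |τ|_v ≥ κ·ε^{−m−1}, there are at most m finite places v of K satisfying Nv ≥ (ε·size(τ))^d and |Δ(τ)|_v < 1. -/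
open NumberField IsDedekindDomain

private theorem eval_bound {K : Type*} [Field K] [NumberField K] (w : InfinitePlace K)
    (p : Polynomial K) (x : K) :
    w (p.eval x) ≤ (∑ i ∈ Finset.range (p.natDegree + 1), w (p.coeff i)) *
      max 1 (w x) ^ p.natDegree := by
  rw [Polynomial.eval_eq_sum_range]
  calc w (∑ i ∈ Finset.range (p.natDegree + 1), p.coeff i * x ^ i)
      ≤ ∑ i ∈ Finset.range (p.natDegree + 1), w (p.coeff i * x ^ i) := w.1.sum_le _ _
    _ ≤ ∑ i ∈ Finset.range (p.natDegree + 1), w (p.coeff i) * max 1 (w x) ^ p.natDegree := by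
        refine Finset.sum_le_sum fun i hi => ?_
        rw [map_mul, map_pow]
        refine mul_le_mul_of_nonneg_left ?_ (w.1.nonneg _)
        calc w x ^ i ≤ max 1 (w x) ^ i := pow_le_pow_left₀ (w.1.nonneg _) (le_max_right _ _) _
          _ ≤ max 1 (w x) ^ p.natDegree :=
            pow_le_pow_right₀ (le_max_left _ _) (Nat.lt_succ_iff.mp (Finset.mem_range.mp hi))
    _ = _ := by rw [← Finset.sum_mul]


/-- Let `K` be a number field of degree `d`, `m ≥ 1`, and `Δ ∈ 𝒪_K[T]` monic of degree `m`.
There is a constant `κ ≥ 1` (depending only on `K` and `Δ`) such that for every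
`0 < ε ≤ 1` and every `τ ∈ 𝒪_K` with `Δ(τ) ≠ 0` and `size τ ≥ κ·ε^{-m-1}`, there are at
most `m` finite places `v` of `K` with `Nv ≥ (ε·size τ)^d` and `|Δ(τ)|_v < 1` (i.e.
`Δ(τ) ∈ 𝔭_v`).  Here `size τ = max_{v|∞} |τ|_v`. -/
theorem few_large_ramified_places
    (K : Type*) [Field K] [NumberField K]
    (m : ℕ) (hm : 1 ≤ m) (Δ : Polynomial (𝓞 K)) (hΔ : Δ.Monic) (hΔdeg : Δ.natDegree = m) :
    ∃ κ : ℝ, 1 ≤ κ ∧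
      ∀ ε : ℝ, 0 < ε → ε ≤ 1 →
        ∀ τ : 𝓞 K, Δ.eval τ ≠ 0 →
          κ * ε⁻¹ ^ (m + 1) ≤ (⨆ v : InfinitePlace K, v (algebraMap (𝓞 K) K τ)) →
            {v : HeightOneSpectrum (𝓞 K) |
                (ε * ⨆ w : InfinitePlace K, w (algebraMap (𝓞 K) K τ)) ^
                    (Module.finrank ℚ K) ≤ (Ideal.absNorm v.asIdeal : ℝ) ∧
                  Δ.eval τ ∈ v.asIdeal}.Finite ∧
              {v : HeightOneSpectrum (𝓞 K) |
                  (ε * ⨆ w : InfinitePlace K, w (algebraMap (𝓞 K) K τ)) ^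
                      (Module.finrank ℚ K) ≤ (Ideal.absNorm v.asIdeal : ℝ) ∧
                    Δ.eval τ ∈ v.asIdeal}.ncard ≤ m := by
  set f := algebraMap (𝓞 K) K
  set d := Module.finrank ℚ K with hd
  have hd1 : 1 ≤ d := Module.finrank_pos
  set P : Polynomial K := Δ.map f with hP
  have hPdeg : P.natDegree = m := by rw [hP, hΔ.natDegree_map, hΔdeg]
  set Cw : InfinitePlace K → ℝ := fun w => ∑ i ∈ Finset.range (m + 1), w (P.coeff i) with hCw
  have hCw0 : ∀ w, 0 ≤ Cw w := fun w => Finset.sum_nonneg fun i _ => w.1.nonneg _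
  set C : ℝ := ∏ w : InfinitePlace K, Cw w ^ w.mult with hC
  have hC0 : 0 ≤ C := Finset.prod_nonneg fun w _ => pow_nonneg (hCw0 w) _
  refine ⟨C + 1, by linarith, ?_⟩
  intro ε hε hε1 τ hτ hs
  set s : ℝ := ⨆ w : InfinitePlace K, w (f τ) with hsdef
  set κ : ℝ := C + 1 with hκ
  have hκ1 : 1 ≤ κ := by rw [hκ]; linarith
  have hεinv : 1 ≤ ε⁻¹ ^ (m + 1) := one_le_pow₀ ((one_le_inv₀ hε).mpr hε1)
  have hκs : κ ≤ s := le_trans (le_mul_of_one_le_right (by linarith) hεinv) hs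
  have hs1 : 1 ≤ s := le_trans hκ1 hκs
  have hws : ∀ w : InfinitePlace K, w (f τ) ≤ s :=
    fun w => le_ciSup (f := fun w : InfinitePlace K => w (f τ)) (Set.Finite.bddAbove (Set.finite_range _)) w
  -- upper bound on the norm
  have hnorm : |(Algebra.norm ℚ (f (Δ.eval τ)) : ℝ)| ≤ C * s ^ (m * d) := by
    have heq : f (Δ.eval τ) = P.eval (f τ) := by
      rw [hP, Polynomial.eval_map, Polynomial.eval₂_at_apply]
    rw [← Rat.cast_abs, ← InfinitePlace.prod_eq_abs_norm, heq]
    calc ∏ w : InfinitePlace K, w (P.eval (f τ)) ^ w.mult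
        ≤ ∏ w : InfinitePlace K, (Cw w * s ^ m) ^ w.mult := by
          refine Finset.prod_le_prod (fun w _ => pow_nonneg (w.1.nonneg _) _) fun w _ => ?_
          refine pow_le_pow_left₀ (w.1.nonneg _) ?_ _
          calc w (P.eval (f τ))
              ≤ (∑ i ∈ Finset.range (P.natDegree + 1), w (P.coeff i)) *
                  max 1 (w (f τ)) ^ P.natDegree := eval_bound w P (f τ)
            _ ≤ Cw w * s ^ m := by
                rw [hPdeg]
                refine mul_le_mul_of_nonneg_left ?_ (hCw0 w)
                exact pow_le_pow_left₀ (le_trans zero_le_one (le_max_left _ _))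
                  (max_le hs1 (hws w)) _
      _ = C * s ^ (m * d) := by
          simp_rw [mul_pow, ← pow_mul]
          rw [Finset.prod_mul_distrib, ← hC, Finset.prod_pow_eq_pow_sum,
            ← Finset.mul_sum, InfinitePlace.sum_mult_eq, ← hd]
  -- the set and its finiteness
  set S : Set (HeightOneSpectrum (𝓞 K)) :=
    {v | (ε * s) ^ d ≤ (Ideal.absNorm v.asIdeal : ℝ) ∧ Δ.eval τ ∈ v.asIdeal} with hS
  have hspan : Ideal.span {Δ.eval τ} ≠ 0 := by
    simpa [Ideal.span_singleton_eq_bot] using hτ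
  have hfin : S.Finite := by
    refine (Ideal.finite_factors hspan).subset fun v hv => ?_
    exact Ideal.dvd_span_singleton.mpr hv.2
  refine ⟨hfin, ?_⟩
  by_contra hcard
  push_neg at hcard
  have hmc : m + 1 ≤ hfin.toFinset.card := by
    rw [← Set.ncard_eq_toFinset_card _ hfin]; omega
  obtain ⟨F, hF, hFcard⟩ := Finset.exists_subset_card_eq hmc
  -- product of norms divides the norm of Δ(τ)
  have hdvd : (∏ v ∈ F, v.asIdeal) ∣ Ideal.span {Δ.eval τ} := by
    refine Finset.prod_dvd_of_coprime (fun v hv w hw hvw => ?_) fun v hv => ?_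
    · exact Ideal.isCoprime_iff_sup_eq.mpr
        (Ideal.IsMaximal.coprime_of_ne (v.isPrime.isMaximal v.ne_bot) (w.isPrime.isMaximal w.ne_bot)
          (fun h => hvw (HeightOneSpectrum.ext h)))
    · exact Ideal.dvd_span_singleton.mpr
        ((hfin.mem_toFinset.mp (hF hv)).2)
  have hNdvd : (∏ v ∈ F, Ideal.absNorm v.asIdeal) ∣ Ideal.absNorm (Ideal.span {Δ.eval τ}) := by
    rw [← map_prod]; exact map_dvd _ hdvd
  have hNne : Ideal.absNorm (Ideal.span {Δ.eval τ}) ≠ 0 := by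
    rw [Ne, Ideal.absNorm_eq_zero_iff]; exact hspan
  have hle : ((∏ v ∈ F, Ideal.absNorm v.asIdeal : ℕ) : ℝ) ≤
      (Ideal.absNorm (Ideal.span {Δ.eval τ}) : ℝ) :=
    Nat.cast_le.mpr (Nat.le_of_dvd (Nat.pos_of_ne_zero hNne) hNdvd)
  -- absNorm of span equals |norm|
  have habs : ((Ideal.absNorm (Ideal.span {Δ.eval τ}) : ℕ) : ℝ) =
      |(Algebra.norm ℚ (f (Δ.eval τ)) : ℝ)| := by
    have h2 : ((Algebra.norm ℤ (Δ.eval τ) : ℤ) : ℚ) = Algebra.norm ℚ (f (Δ.eval τ)) :=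
      Algebra.coe_norm_int _
    rw [Ideal.absNorm_span_singleton, Nat.cast_natAbs, ← h2]
    push_cast
    ring
  -- lower bound
  have hlow : ((ε * s) ^ d) ^ (m + 1) ≤ ((∏ v ∈ F, Ideal.absNorm v.asIdeal : ℕ) : ℝ) := by
    push_cast
    rw [← hFcard, ← Finset.prod_const]
    refine Finset.prod_le_prod (fun v _ => pow_nonneg (by positivity) _) fun v hv => ?_
    exact (hfin.mem_toFinset.mp (hF hv)).1
  -- combine
  have hkey : ((ε * s) ^ d) ^ (m + 1) ≤ C * s ^ (m * d) :=
    le_trans hlow (le_trans hle (le_of_eq_of_le habs hnorm))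
  have hmain : κ ^ d * s ^ (m * d) ≤ ((ε * s) ^ d) ^ (m + 1) := by
    have hsd : κ ^ d * (ε⁻¹ ^ (m + 1)) ^ d ≤ s ^ d := by
      rw [← mul_pow]; exact pow_le_pow_left₀ (by positivity) hs d
    have hone : ε ^ (d * (m + 1)) * (ε⁻¹ ^ (m + 1)) ^ d = 1 := by
      rw [← pow_mul, mul_comm (m + 1) d, ← mul_pow, mul_inv_cancel₀ (ne_of_gt hε), one_pow]
    have h2 : κ ^ d ≤ ε ^ (d * (m + 1)) * s ^ d := by
      calc κ ^ d = ε ^ (d * (m + 1)) * (κ ^ d * (ε⁻¹ ^ (m + 1)) ^ d) := by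
            rw [show ε ^ (d * (m + 1)) * (κ ^ d * (ε⁻¹ ^ (m + 1)) ^ d)
                = (ε ^ (d * (m + 1)) * (ε⁻¹ ^ (m + 1)) ^ d) * κ ^ d from by ring, hone, one_mul]
        _ ≤ ε ^ (d * (m + 1)) * s ^ d := mul_le_mul_of_nonneg_left hsd (by positivity)
    have h1 : ((ε * s) ^ d) ^ (m + 1) = (ε ^ (d * (m + 1)) * s ^ d) * s ^ (m * d) := by
      rw [← pow_mul, mul_pow, show d * (m + 1) = m * d + d from by ring, pow_add]
      ring
    calc κ ^ d * s ^ (m * d) ≤ (ε ^ (d * (m + 1)) * s ^ d) * s ^ (m * d) :=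
          mul_le_mul_of_nonneg_right h2 (by positivity)
      _ = ((ε * s) ^ d) ^ (m + 1) := h1.symm
  have hsd0 : 0 < s ^ (m * d) := by positivity
  have : κ ^ d ≤ C := by
    have := le_trans hmain hkey
    exact le_of_mul_le_mul_right (by linarith [this]) hsd0
  have : κ ≤ C := le_trans (le_self_pow₀ hκ1 (by omega)) this
  linarith
end
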